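/- arXiv:1810.07569 — 6 statements merged into one kernel-verified Lean document; each statement's English description precedes it below -/
import Mathlib

section
/- Fix Θ ∈ (0,π/2] and Ψ ∈ [0,π], and let l be a positive integer. Let θ ∈ [0,π), ψ ∈ [0,π), φ ∈ [0,4π). Then there exist β₀, β₁, …, β_{l−1} ∈ [0,4π) and γ₁, …, γ_{l−1} ∈ [0,4π) such that R(θ,ψ,φ) = R(0,0,β₀)·R(Θ,Ψ,γ₁)·R(0,0,β₁)·⋯·R(Θ,Ψ,γ_{l−1})·R(0,0,β_{l−1}) if and only if |δ₁(θ,φ)| ≤ (l−1)·Θ. -/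
open Real

/-- The SU(2) rotation by angle φ about the axis (sin θ cos ψ, sin θ sin ψ, cos θ). -/
noncomputable def Rot (θ ψ φ : ℝ) : Matrix (Fin 2) (Fin 2) ℂ :=
  !![(Real.cos (φ/2) : ℂ) - Complex.I * (Real.sin (φ/2) : ℂ) * (Real.cos θ : ℂ),
     -Complex.I * (Real.sin (φ/2) : ℂ) * (Real.sin θ : ℂ) * Complex.exp (-(Complex.I * (ψ : ℂ)));
     -Complex.I * (Real.sin (φ/2) : ℂ) * (Real.sin θ : ℂ) * Complex.exp (Complex.I * (ψ : ℂ)),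
     (Real.cos (φ/2) : ℂ) + Complex.I * (Real.sin (φ/2) : ℂ) * (Real.cos θ : ℂ)]

/-- δ₁(θ,φ) = arcsin( sin θ · sin(φ/2) ). -/
noncomputable def delta1 (θ φ : ℝ) : ℝ := Real.arcsin (Real.sin θ * Real.sin (φ/2))

/-! ### Auxiliary development -/

/-- The generic SU(2)-form matrix. -/
noncomputable def Mf (x y : ℂ) : Matrix (Fin 2) (Fin 2) ℂ :=
  !![x, y; -(starRingEnd ℂ) y, (starRingEnd ℂ) x]

lemma Mf_mul (x₁ y₁ x₂ y₂ : ℂ) :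
    Mf x₁ y₁ * Mf x₂ y₂ =
      Mf (x₁*x₂ - y₁ * (starRingEnd ℂ) y₂) (x₁*y₂ + y₁ * (starRingEnd ℂ) x₂) := by
  ext i j
  fin_cases i <;> fin_cases j <;>
    simp [Mf, Matrix.mul_fin_two, map_add, map_mul, map_sub] <;> ring

lemma Mf_one : Mf 1 0 = 1 := by
  simp [Mf, Matrix.one_fin_two]

lemma Mf_01 (x y : ℂ) : Mf x y 0 1 = y := by simp [Mf]

lemma Rot_eq_Mf (θ ψ φ : ℝ) :
    Rot θ ψ φ = Mf ((Real.cos (φ/2) : ℂ) - Complex.I * (Real.sin (φ/2) : ℂ) * (Real.cos θ : ℂ))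
      (-Complex.I * (Real.sin (φ/2) : ℂ) * (Real.sin θ : ℂ) * Complex.exp (-(Complex.I * (ψ : ℂ)))) := by
  ext i j
  fin_cases i <;> fin_cases j <;>
    simp only [Rot, Mf, Matrix.cons_val', Matrix.cons_val_zero, Matrix.cons_val_one,
      Matrix.head_cons, Matrix.head_fin_const, Matrix.empty_val', Matrix.cons_val_fin_one,
      Matrix.of_apply, map_mul, map_sub, map_neg, Complex.conj_ofReal, Complex.conj_I,
      ← Complex.exp_conj] <;> ring

lemma good_Rot (θ ψ φ : ℝ) :
    Complex.normSq ((Real.cos (φ/2) : ℂ) - Complex.I * (Real.sin (φ/2) : ℂ) * (Real.cos θ : ℂ))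
    + Complex.normSq (-Complex.I * (Real.sin (φ/2) : ℂ) * (Real.sin θ : ℂ)
        * Complex.exp (-(Complex.I * (ψ : ℂ)))) = 1 := by
  simp only [Complex.normSq_apply, Complex.sub_re, Complex.sub_im, Complex.mul_re, Complex.mul_im,
    Complex.neg_re, Complex.neg_im, Complex.I_re, Complex.I_im, Complex.ofReal_re, Complex.ofReal_im,
    Complex.exp_re, Complex.exp_im, mul_zero, zero_mul, mul_one, one_mul, sub_zero, zero_sub,
    neg_zero, neg_neg, zero_add, add_zero, Real.exp_zero, Real.cos_neg, Real.sin_neg]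
  linear_combination (Real.sin (φ/2)^2 * Real.sin θ^2) * Real.sin_sq_add_cos_sq ψ
    + (Real.sin (φ/2)^2) * Real.sin_sq_add_cos_sq θ + Real.sin_sq_add_cos_sq (φ/2)

lemma good_mul {x₁ y₁ x₂ y₂ : ℂ} (h₁ : Complex.normSq x₁ + Complex.normSq y₁ = 1)
    (h₂ : Complex.normSq x₂ + Complex.normSq y₂ = 1) :
    Complex.normSq (x₁*x₂ - y₁ * (starRingEnd ℂ) y₂)
    + Complex.normSq (x₁*y₂ + y₁ * (starRingEnd ℂ) x₂) = 1 := by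
  have key : Complex.normSq (x₁*x₂ - y₁ * (starRingEnd ℂ) y₂)
      + Complex.normSq (x₁*y₂ + y₁ * (starRingEnd ℂ) x₂)
      = (Complex.normSq x₁ + Complex.normSq y₁) * (Complex.normSq x₂ + Complex.normSq y₂) := by
    simp [Complex.normSq_apply, Complex.mul_re, Complex.mul_im, Complex.sub_re, Complex.sub_im,
      Complex.add_re, Complex.add_im]
    ring
  rw [key, h₁, h₂, one_mul]

set_option maxHeartbeats 1000000 in
lemma Rot_mul_inv (θ ψ φ : ℝ) : Rot θ ψ φ * Rot θ ψ (-φ) = 1 := by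
  have hE : Complex.exp (-(Complex.I * (ψ:ℂ))) * Complex.exp (Complex.I * (ψ:ℂ)) = 1 := by
    rw [← Complex.exp_add]; simp
  have h2 : Complex.sin ((φ:ℂ)/2)^2 + Complex.cos ((φ:ℂ)/2)^2 = 1 := Complex.sin_sq_add_cos_sq _
  have h3 : Complex.sin (θ:ℂ)^2 + Complex.cos (θ:ℂ)^2 = 1 := Complex.sin_sq_add_cos_sq _
  ext i j
  fin_cases i <;> fin_cases j <;>
    simp [Rot, Matrix.mul_apply, Fin.sum_univ_two, Matrix.one_apply, neg_div]
  · linear_combination (Complex.sin ((φ:ℂ)/2)^2*Complex.sin (θ:ℂ)^2)*hE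
      + (Complex.sin ((φ:ℂ)/2)^2)*h3 + h2
      + (-(Complex.sin ((φ:ℂ)/2)^2*Complex.cos (θ:ℂ)^2)
         - Complex.sin ((φ:ℂ)/2)^2*Complex.sin (θ:ℂ)^2*Complex.exp (-(Complex.I * (ψ:ℂ)))
           *Complex.exp (Complex.I * (ψ:ℂ)))*Complex.I_sq
  · ring
  · ring
  · linear_combination (Complex.sin ((φ:ℂ)/2)^2*Complex.sin (θ:ℂ)^2)*hE
      + (Complex.sin ((φ:ℂ)/2)^2)*h3 + h2
      + (-(Complex.sin ((φ:ℂ)/2)^2*Complex.cos (θ:ℂ)^2)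
         - Complex.sin ((φ:ℂ)/2)^2*Complex.sin (θ:ℂ)^2*Complex.exp (-(Complex.I * (ψ:ℂ)))
           *Complex.exp (Complex.I * (ψ:ℂ)))*Complex.I_sq

lemma Rz_eq (a : ℝ) : Rot 0 0 a = Mf (Complex.exp (((-a/2 : ℝ) : ℂ) * Complex.I)) 0 := by
  have hx : (Real.cos (a/2) : ℂ) - Complex.I * (Real.sin (a/2):ℂ) * (Real.cos 0 : ℂ)
      = Complex.exp (((-a/2 : ℝ):ℂ) * Complex.I) := by
    rw [Complex.exp_mul_I]
    rw [show ((-a/2 : ℝ):ℂ) = -((a/2 : ℝ):ℂ) by push_cast; ring]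
    rw [Complex.cos_neg, Complex.sin_neg, ← Complex.ofReal_cos, ← Complex.ofReal_sin]
    simp [Real.cos_zero]
    ring
  have hy : -Complex.I * ((Real.sin (a/2):ℂ)) * ((Real.sin 0:ℂ))
      * Complex.exp (-(Complex.I * ((0:ℝ):ℂ))) = 0 := by simp
  rw [Rot_eq_Mf, hx, hy]

lemma abs_le_one_of_good {x y : ℂ} (h : Complex.normSq x + Complex.normSq y = 1) :
    ‖y‖ ≤ 1 := by
  have h1 : ‖y‖ ^ 2 ≤ 1 := by
    rw [Complex.sq_norm]; nlinarith [Complex.normSq_nonneg x]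
  nlinarith [norm_nonneg y]

lemma abs_x_of_good {x y : ℂ} (h : Complex.normSq x + Complex.normSq y = 1) :
    ‖x‖ = Real.sqrt (1 - ‖y‖ ^ 2) := by
  rw [Complex.norm_def, Complex.sq_norm]
  congr 1
  linarith

lemma arcsin_est {s1 s2 t : ℝ} (hs1 : 0 ≤ s1) (hs1' : s1 ≤ 1) (hs2 : 0 ≤ s2) (hs2' : s2 ≤ 1)
    (h : t ≤ Real.sqrt (1-s1^2) * s2 + s1 * Real.sqrt (1-s2^2)) :
    Real.arcsin t ≤ Real.arcsin s1 + Real.arcsin s2 := by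
  set A := Real.arcsin s1 with hA
  set B := Real.arcsin s2 with hB
  have hA0 : 0 ≤ A := Real.arcsin_nonneg.2 hs1
  have hB0 : 0 ≤ B := Real.arcsin_nonneg.2 hs2
  rcases le_or_gt (A + B) (π/2) with hle | hgt
  · have hsinA : Real.sin A = s1 := Real.sin_arcsin (by linarith) hs1'
    have hsinB : Real.sin B = s2 := Real.sin_arcsin (by linarith) hs2'
    have hcosA : Real.cos A = Real.sqrt (1 - s1^2) := Real.cos_arcsin s1
    have hcosB : Real.cos B = Real.sqrt (1 - s2^2) := Real.cos_arcsin s2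
    have hsum : Real.sin (A + B) = Real.sqrt (1-s1^2) * s2 + s1 * Real.sqrt (1-s2^2) := by
      rw [Real.sin_add, hsinA, hsinB, hcosA, hcosB]; ring
    have := Real.monotone_arcsin (le_trans h (le_of_eq hsum.symm))
    calc Real.arcsin t ≤ Real.arcsin (Real.sin (A+B)) := Real.monotone_arcsin (h.trans hsum.ge)
      _ = A + B := Real.arcsin_sin (by linarith) hle
  · exact (Real.arcsin_le_pi_div_two t).trans hgt.le

/-- Matrices in SU(2)-form with tilt bound. -/
def IsF (M : Matrix (Fin 2) (Fin 2) ℂ) (k : ℝ) : Prop :=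
  ∃ x y : ℂ, M = Mf x y ∧ Complex.normSq x + Complex.normSq y = 1
    ∧ Real.arcsin (‖y‖) ≤ k

lemma IsF_mul {M N : Matrix (Fin 2) (Fin 2) ℂ} {kM kN : ℝ}
    (hM : IsF M kM) (hN : IsF N kN) : IsF (M * N) (kM + kN) := by
  obtain ⟨x₁, y₁, rfl, hg₁, hb₁⟩ := hM
  obtain ⟨x₂, y₂, rfl, hg₂, hb₂⟩ := hN
  refine ⟨_, _, Mf_mul x₁ y₁ x₂ y₂, good_mul hg₁ hg₂, ?_⟩
  have h1 : ‖x₁*y₂ + y₁ * (starRingEnd ℂ) x₂‖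
      ≤ Real.sqrt (1 - ‖y₁‖^2) * ‖y₂‖
        + ‖y₁‖ * Real.sqrt (1 - ‖y₂‖^2) := by
    calc ‖x₁*y₂ + y₁ * (starRingEnd ℂ) x₂‖
        ≤ ‖x₁*y₂‖ + ‖y₁ * (starRingEnd ℂ) x₂‖ :=
          norm_add_le _ _
      _ = ‖x₁‖ * ‖y₂‖ + ‖y₁‖ * ‖x₂‖ := by
          simp [map_mul, Complex.norm_conj]
      _ = _ := by rw [abs_x_of_good hg₁, abs_x_of_good hg₂]
  have := arcsin_est (norm_nonneg y₁) (abs_le_one_of_good hg₁)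
    (norm_nonneg y₂) (abs_le_one_of_good hg₂) h1
  calc Real.arcsin (‖x₁*y₂ + y₁ * (starRingEnd ℂ) x₂‖)
      ≤ Real.arcsin (‖y₁‖) + Real.arcsin (‖y₂‖) := this
    _ ≤ kM + kN := add_le_add hb₁ hb₂

lemma abs_y_Rot (θ ψ φ : ℝ) :
    ‖-Complex.I * (Real.sin (φ/2) : ℂ) * (Real.sin θ : ℂ)
      * Complex.exp (-(Complex.I * (ψ : ℂ)))‖ = |Real.sin (φ/2)| * |Real.sin θ| := by
  have : ‖Complex.exp (-(Complex.I * (ψ : ℂ)))‖ = 1 := by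
    rw [Complex.norm_exp]; simp
  simp only [norm_mul, this, mul_one, Complex.norm_real, Real.norm_eq_abs, neg_mul, norm_neg, Complex.norm_I,
    one_mul]

lemma IsF_Rot {Θ Ψ : ℝ} (hΘ0 : 0 < Θ) (hΘ : Θ ≤ π/2) (γ : ℝ) : IsF (Rot Θ Ψ γ) Θ := by
  refine ⟨_, _, Rot_eq_Mf Θ Ψ γ, good_Rot Θ Ψ γ, ?_⟩
  rw [abs_y_Rot]
  have hsθ : |Real.sin Θ| = Real.sin Θ :=
    abs_of_nonneg (Real.sin_nonneg_of_nonneg_of_le_pi hΘ0.le (by linarith [Real.pi_pos]))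
  have h1 : |Real.sin (γ/2)| * |Real.sin Θ| ≤ Real.sin Θ := by
    rw [hsθ]
    calc |Real.sin (γ/2)| * Real.sin Θ ≤ 1 * Real.sin Θ := by
          apply mul_le_mul_of_nonneg_right (Real.abs_sin_le_one _)
          exact Real.sin_nonneg_of_nonneg_of_le_pi hΘ0.le (by linarith [Real.pi_pos])
      _ = Real.sin Θ := one_mul _
  calc Real.arcsin (|Real.sin (γ/2)| * |Real.sin Θ|) ≤ Real.arcsin (Real.sin Θ) :=
        Real.monotone_arcsin h1
    _ = Θ := Real.arcsin_sin (by linarith) hΘ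

lemma IsF_Rz (a : ℝ) : IsF (Rot 0 0 a) 0 := by
  refine ⟨_, _, Rz_eq a, ?_, ?_⟩
  · simp only [Complex.normSq_eq_norm_sq, Complex.norm_exp_ofReal_mul_I, one_pow, map_zero,
      zero_pow, add_zero]
  · simp [Real.arcsin_zero]

lemma IsF_prod (g : ℕ → Matrix (Fin 2) (Fin 2) ℂ) (c : ℝ) :
    ∀ k : ℕ, (∀ i < k, IsF (g i) c) → IsF ((List.range k).map g).prod (k * c) := by
  intro k
  induction k with
  | zero =>
    intro _
    refine ⟨1, 0, by simp [Mf_one], by simp, by simp [Real.arcsin_zero]⟩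
  | succ n ih =>
    intro h
    rw [List.range_succ, List.map_append, List.prod_append]
    have h1 := ih (fun i hi => h i (by omega))
    have h2 := h n (by omega)
    have e : (List.map g [n]).prod = g n := by simp
    rw [e, show ((n+1 : ℕ) : ℝ) * c = (n : ℝ)*c + c by push_cast; ring]
    exact IsF_mul h1 h2

lemma exp_arg_eq_self {z : ℂ} (hz : ‖z‖ = 1) :
    Complex.exp ((z.arg : ℂ) * Complex.I) = z := by
  have := Complex.norm_mul_exp_arg_mul_I z
  rwa [hz, Complex.ofReal_one, one_mul] at this

lemma phase (u v : ℂ) : ∃ a : ℝ, 0 ≤ a ∧ a < 4*π ∧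
    ‖Complex.exp (((a/2 : ℝ) : ℂ) * Complex.I) * u
      + (starRingEnd ℂ) (Complex.exp (((a/2 : ℝ) : ℂ) * Complex.I)) * v‖
    = |‖u‖ - ‖v‖| := by
  have hπ := Real.pi_pos
  have hconj : ∀ r : ℝ, (starRingEnd ℂ) (Complex.exp ((r : ℂ) * Complex.I))
      = Complex.exp (((-r : ℝ) : ℂ) * Complex.I) := by
    intro r
    rw [← Complex.exp_conj]
    congr 1
    simp [Complex.conj_ofReal]
  rcases eq_or_ne u 0 with hu | hu
  · refine ⟨0, le_refl 0, by linarith, ?_⟩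
    rw [hconj]
    simp [hu, abs_sub_comm]
  rcases eq_or_ne v 0 with hv | hv
  · refine ⟨0, le_refl 0, by linarith, ?_⟩
    rw [hconj]
    simp [hv]
  have hu' : ‖u‖ ≠ 0 := by simpa using hu
  have hv' : ‖v‖ ≠ 0 := by simpa using hv
  set z : ℂ := -(((‖v‖ : ℝ) : ℂ) * u) / (((‖u‖ : ℝ) : ℂ) * v) with hz
  have hzabs : ‖z‖ = 1 := by
    rw [hz]
    rw [norm_div, norm_neg, norm_mul, norm_mul, Complex.norm_real, Complex.norm_real, Real.norm_eq_abs, Real.norm_eq_abs,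
      abs_of_nonneg (norm_nonneg v), abs_of_nonneg (norm_nonneg u)]
    field_simp
  refine ⟨2*π - z.arg, by linarith [Complex.arg_le_pi z], by linarith [Complex.neg_pi_lt_arg z], ?_⟩
  rw [hconj]
  have key : Complex.exp ((((2*π - z.arg)/2 : ℝ) : ℂ) * Complex.I) * u
      + Complex.exp (((-( (2*π - z.arg)/2) : ℝ) : ℂ) * Complex.I) * v
      = Complex.exp ((((2*π - z.arg)/2 : ℝ) : ℂ) * Complex.I)
        * (u + Complex.exp (((-(2*π - z.arg) : ℝ) : ℂ) * Complex.I) * v) := by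
    rw [mul_add, ← mul_assoc, ← Complex.exp_add]
    congr 2
    push_cast
    ring
  rw [key, norm_mul, Complex.norm_exp_ofReal_mul_I, one_mul]
  have hexpz : Complex.exp (((-(2*π - z.arg) : ℝ) : ℂ) * Complex.I) = z := by
    rw [show ((-(2*π - z.arg) : ℝ) : ℂ) * Complex.I
        = (z.arg : ℂ) * Complex.I - 2*(π:ℂ)*Complex.I by push_cast; ring]
    rw [Complex.exp_sub, Complex.exp_two_pi_mul_I, div_one, exp_arg_eq_self hzabs]
  rw [hexpz]
  have hcomb : u + z * v
      = (((‖u‖ - ‖v‖ : ℝ) : ℂ) / ((‖u‖ : ℝ) : ℂ)) * u := by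
    rw [hz]
    have h1 : (((‖u‖ : ℝ)) : ℂ) ≠ 0 := by
      simpa using hu'
    field_simp
    push_cast
    ring
  rw [hcomb, norm_mul, norm_div, Complex.norm_real, Complex.norm_real, Real.norm_eq_abs, Real.norm_eq_abs,
    abs_of_nonneg (norm_nonneg u)]
  field_simp

lemma Mf_diag {x : ℂ} (hx : Complex.normSq x = 1) :
    ∃ a : ℝ, 0 ≤ a ∧ a < 4*π ∧ Mf x 0 = Rot 0 0 a := by
  have hπ := Real.pi_pos
  have hxabs : ‖x‖ = 1 := by
    have := Complex.sq_norm x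
    nlinarith [norm_nonneg x]
  have harg1 := Complex.arg_le_pi x
  have harg2 := Complex.neg_pi_lt_arg x
  by_cases h : 0 < x.arg
  · refine ⟨4*π - 2*x.arg, by linarith, by linarith, ?_⟩
    rw [Rz_eq]
    congr 2
    rw [show ((-(4*π - 2*x.arg)/2 : ℝ) : ℂ) * Complex.I
        = (x.arg : ℂ) * Complex.I - 2*(π:ℂ)*Complex.I by push_cast; ring]
    rw [Complex.exp_sub, Complex.exp_two_pi_mul_I, div_one, exp_arg_eq_self hxabs]
  · refine ⟨-2*x.arg, by linarith [not_lt.1 h], by linarith, ?_⟩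
    rw [Rz_eq]
    congr 2
    rw [show ((-(-2*x.arg)/2 : ℝ) : ℂ) * Complex.I = (x.arg : ℂ) * Complex.I by push_cast; ring]
    rw [exp_arg_eq_self hxabs]

lemma prod_shift (f : ℕ → Matrix (Fin 2) (Fin 2) ℂ) (k : ℕ) :
    ((List.range (k+1)).map f).prod = f 0 * ((List.range k).map (fun i => f (i+1))).prod := by
  rw [List.range_succ_eq_map, List.map_cons, List.prod_cons, List.map_map]
  rfl

set_option maxHeartbeats 2000000 in
lemma key {Θ Ψ : ℝ} (hΘ0 : 0 < Θ) (hΘ : Θ ≤ π/2) :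
    ∀ k : ℕ, ∀ x y : ℂ, Complex.normSq x + Complex.normSq y = 1 →
      Real.arcsin (‖y‖) ≤ k * Θ →
      ∃ β γ : ℕ → ℝ,
        (∀ i ≤ k, β i ∈ Set.Ico 0 (4*π)) ∧
        (∀ i, 1 ≤ i → i ≤ k → γ i ∈ Set.Ico 0 (4*π)) ∧
        Mf x y = Rot 0 0 (β 0) *
          ((List.range k).map (fun i => Rot Θ Ψ (γ (i+1)) * Rot 0 0 (β (i+1)))).prod := by
  have hπ := Real.pi_pos
  intro k
  induction k with
  | zero =>
    intro x y hg hb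
    have hy0 : y = 0 := by
      have h1 : Real.arcsin (‖y‖) = 0 :=
        le_antisymm (by simpa using hb) (Real.arcsin_nonneg.2 (norm_nonneg y))
      have h2 := Real.sin_arcsin (by linarith [norm_nonneg y]) (abs_le_one_of_good hg)
      rw [h1, Real.sin_zero] at h2
      exact norm_eq_zero.1 h2.symm
    subst hy0
    obtain ⟨a, ha0, ha1, ha⟩ := Mf_diag (by simpa using hg)
    exact ⟨fun _ => a, fun _ => 0, fun i _ => ⟨ha0, ha1⟩, fun i h1 h0 => by omega,
      by simp [ha]⟩
  | succ k ih =>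
    intro x y hg hb
    set δ := Real.arcsin (‖y‖) with hδdef
    have hδ0 : 0 ≤ δ := Real.arcsin_nonneg.2 (norm_nonneg y)
    have hδπ : δ ≤ π/2 := Real.arcsin_le_pi_div_two _
    set ε := min δ Θ with hεdef
    have hε0 : 0 ≤ ε := le_min hδ0 hΘ0.le
    have hεδ : ε ≤ δ := min_le_left _ _
    have hεΘ : ε ≤ Θ := min_le_right _ _
    have hsinΘpos : 0 < Real.sin Θ := Real.sin_pos_of_pos_of_lt_pi hΘ0 (by linarith)
    have hsinε0 : 0 ≤ Real.sin ε := Real.sin_nonneg_of_nonneg_of_le_pi hε0 (by linarith)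
    have hsinmono : Real.sin ε ≤ Real.sin Θ := by
      rcases eq_or_lt_of_le hεΘ with h | h
      · rw [h]
      · exact (Real.strictMonoOn_sin ⟨by linarith, by linarith⟩ ⟨by linarith, hΘ⟩ h).le
    set s := Real.sin ε / Real.sin Θ with hsdef
    have hs0 : 0 ≤ s := div_nonneg hsinε0 hsinΘpos.le
    have hs1 : s ≤ 1 := by rw [hsdef, div_le_one hsinΘpos]; exact hsinmono
    have hsSin : s * Real.sin Θ = Real.sin ε := by
      rw [hsdef]; field_simp
    set γ := 2 * Real.arcsin s with hγdef
    have hγ2 : γ/2 = Real.arcsin s := by rw [hγdef]; ring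
    have hγ0 : 0 ≤ γ := by
      rw [hγdef]
      have := Real.arcsin_nonneg.2 hs0
      linarith
    have hγπ : γ ≤ π := by
      have := Real.arcsin_le_pi_div_two s
      rw [hγdef]; linarith
    have hsinγ2 : Real.sin (γ/2) = s := by rw [hγ2, Real.sin_arcsin (by linarith) hs1]
    have hcosγ2 : Real.cos (γ/2) = Real.sqrt (1 - s^2) := by rw [hγ2, Real.cos_arcsin]
    -- the p and q entries of Rot Θ Ψ (-γ)
    set p : ℂ := (Real.cos (-γ/2) : ℂ) - Complex.I * (Real.sin (-γ/2) : ℂ) * (Real.cos Θ : ℂ)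
      with hpdef
    set q : ℂ := -Complex.I * (Real.sin (-γ/2) : ℂ) * (Real.sin Θ : ℂ)
      * Complex.exp (-(Complex.I * (Ψ : ℂ))) with hqdef
    have hP : Rot Θ Ψ (-γ) = Mf p q := Rot_eq_Mf Θ Ψ (-γ)
    -- choose the phase a
    obtain ⟨a, ha0, ha4, habs⟩ := phase (p * y) (q * (starRingEnd ℂ) x)
    set E : ℂ := Complex.exp (((a/2 : ℝ) : ℂ) * Complex.I) with hEdef
    have hA : Rot 0 0 (-a) = Mf E 0 := by
      rw [Rz_eq, show (-(-a)/2 : ℝ) = a/2 by ring]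
    have hEabs : ‖E‖ = 1 := by rw [hEdef]; exact Complex.norm_exp_ofReal_mul_I _
    have hEgood : Complex.normSq E + Complex.normSq (0:ℂ) = 1 := by
      rw [Complex.normSq_eq_norm_sq, hEabs]; simp
    have h1 : Rot 0 0 (-a) * Mf x y = Mf (E*x) (E*y) := by
      rw [hA, Mf_mul]
      simp
    set X : ℂ := p*(E*x) - q * (starRingEnd ℂ) (E*y) with hXdef
    set Y : ℂ := p*(E*y) + q * (starRingEnd ℂ) (E*x) with hYdef
    have h2 : Rot Θ Ψ (-γ) * Mf (E*x) (E*y) = Mf X Y := by rw [hP, Mf_mul]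
    have hgood2 : Complex.normSq (E*x) + Complex.normSq (E*y) = 1 := by
      have : Complex.normSq E = 1 := by simpa using hEgood
      simp [Complex.normSq_mul, this, hg]
    have hgoodXY : Complex.normSq X + Complex.normSq Y = 1 :=
      good_mul (good_Rot Θ Ψ (-γ)) hgood2
    -- compute the absolute values
    have hyabs : ‖y‖ = Real.sin δ :=
      (Real.sin_arcsin (by linarith [norm_nonneg y]) (abs_le_one_of_good hg)).symm
    have hxabs : ‖x‖ = Real.cos δ := by
      rw [abs_x_of_good hg, hδdef, ← Real.cos_arcsin]
    have hcosε0 : 0 ≤ Real.cos ε := Real.cos_nonneg_of_mem_Icc ⟨by linarith, by linarith⟩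
    have hpabs : ‖p‖ = Real.cos ε := by
      have hns : Complex.normSq p = Real.cos ε ^ 2 := by
        rw [hpdef]
        simp only [Complex.normSq_apply, Complex.sub_re, Complex.sub_im, Complex.mul_re,
          Complex.mul_im, Complex.I_re, Complex.I_im, Complex.ofReal_re, Complex.ofReal_im,
          mul_zero, zero_mul, mul_one, one_mul, sub_zero, zero_sub, neg_zero, neg_neg,
          zero_add, add_zero]
        rw [neg_div, Real.cos_neg, Real.sin_neg, hsinγ2, hcosγ2]
        have hsq : Real.sqrt (1 - s^2) * Real.sqrt (1 - s^2) = 1 - s^2 :=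
          Real.mul_self_sqrt (by nlinarith)
        nlinarith [Real.sin_sq_add_cos_sq ε, Real.sin_sq_add_cos_sq Θ, hsSin]
      rw [Complex.norm_def, hns, Real.sqrt_sq hcosε0]
    have hqabs : ‖q‖ = Real.sin ε := by
      rw [hqdef, abs_y_Rot Θ Ψ (-γ)]
      rw [neg_div, Real.sin_neg, abs_neg, abs_of_nonneg (by rw [hsinγ2]; exact hs0),
        abs_of_nonneg hsinΘpos.le, hsinγ2, hsSin]
    have hYe : Y = Complex.exp (((a/2 : ℝ) : ℂ) * Complex.I) * (p * y)
        + (starRingEnd ℂ) (Complex.exp (((a/2 : ℝ) : ℂ) * Complex.I)) * (q * (starRingEnd ℂ) x) := by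
      rw [hYdef, hEdef, map_mul]
      ring
    have hYabs : ‖Y‖ = Real.sin (δ - ε) := by
      rw [hYe, habs, norm_mul, norm_mul, Complex.norm_conj, hpabs, hqabs, hyabs, hxabs]
      rw [show Real.cos ε * Real.sin δ - Real.sin ε * Real.cos δ = Real.sin (δ - ε) by
        rw [Real.sin_sub]; ring]
      exact abs_of_nonneg (Real.sin_nonneg_of_nonneg_of_le_pi (by linarith) (by linarith))
    have harcY : Real.arcsin (‖Y‖) = δ - ε := by
      rw [hYabs, Real.arcsin_sin (by linarith) (by linarith)]
    have hbound : Real.arcsin (‖Y‖) ≤ k * Θ := by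
      rw [harcY]
      rcases le_or_gt δ Θ with h | h
      · have : ε = δ := min_eq_left h
        rw [this]
        have : (0:ℝ) ≤ k * Θ := by positivity
        linarith
      · have hεΘ' : ε = Θ := min_eq_right h.le
        rw [hεΘ']
        push_cast at hb
        linarith
    obtain ⟨β', γ', hβ', hγ', hprod'⟩ := ih X Y hgoodXY hbound
    -- the reconstruction
    have hMXY : Mf X Y = Rot Θ Ψ (-γ) * (Rot 0 0 (-a) * Mf x y) := by
      rw [h1, h2]
    have hrec : Mf x y = Rot 0 0 a * (Rot Θ Ψ γ * Mf X Y) := by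
      rw [hMXY, ← Matrix.mul_assoc (Rot Θ Ψ γ), Rot_mul_inv, Matrix.one_mul,
        ← Matrix.mul_assoc (Rot 0 0 a), Rot_mul_inv, Matrix.one_mul]
    refine ⟨fun i => if i = 0 then a else β' (i-1), fun i => if i = 1 then γ else γ' (i-1),
      ?_, ?_, ?_⟩
    · intro i hi
      rcases Nat.eq_zero_or_pos i with h0 | h0
      · subst h0; simpa using ⟨ha0, ha4⟩
      · have : ¬ (i = 0) := by omega
        simp only [this, if_false]
        exact hβ' (i-1) (by omega)
    · intro i hi1 hik
      rcases eq_or_ne i 1 with h0 | h0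
      · subst h0
        simpa using (⟨hγ0, by linarith⟩ : 0 ≤ γ ∧ γ < 4*π)
      · simp only [h0, if_false]
        exact hγ' (i-1) (by omega) (by omega)
    · rw [prod_shift]
      beta_reduce
      have hf0 : (Rot Θ Ψ (if 0+1 = 1 then γ else γ' (0+1-1))
          * Rot 0 0 (if 0+1 = 0 then a else β' (0+1-1))) = Rot Θ Ψ γ * Rot 0 0 (β' 0) := by
        norm_num
      have hfs : (fun i => Rot Θ Ψ (if (i+1)+1 = 1 then γ else γ' ((i+1)+1-1))
          * Rot 0 0 (if (i+1)+1 = 0 then a else β' ((i+1)+1-1)))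
          = fun i => Rot Θ Ψ (γ' (i+1)) * Rot 0 0 (β' (i+1)) := by
        funext i
        have h1' : ¬ ((i+1)+1 = 1) := by omega
        have h2' : ¬ ((i+1)+1 = 0) := by omega
        simp only [h1', h2', if_false]
        norm_num
      rw [hf0, hfs, hrec, hprod', Matrix.mul_assoc (Rot Θ Ψ γ)]
      norm_num

lemma delta1_abs (θ φ : ℝ) (h0 : 0 ≤ θ) (h1 : θ ≤ π) :
    |delta1 θ φ| = Real.arcsin (|Real.sin (φ/2)| * Real.sin θ) := by
  have hsθ : 0 ≤ Real.sin θ := Real.sin_nonneg_of_nonneg_of_le_pi h0 h1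
  unfold delta1
  rcases le_or_gt 0 (Real.sin (φ/2)) with h | h
  · rw [abs_of_nonneg (Real.arcsin_nonneg.2 (by positivity)), abs_of_nonneg h, mul_comm]
  · rw [abs_of_nonpos (Real.arcsin_nonpos.2 (by nlinarith)), ← Real.arcsin_neg,
      abs_of_neg h]
    congr 1
    ring

theorem stmt10 (Θ Ψ : ℝ) (hΘ : Θ ∈ Set.Ioc 0 (π/2)) (hΨ : Ψ ∈ Set.Icc 0 π)
    (l : ℕ) (hl : 1 ≤ l)
    (θ ψ φ : ℝ) (hθ : θ ∈ Set.Ico 0 π) (hψ : ψ ∈ Set.Ico 0 π) (hφ : φ ∈ Set.Ico 0 (4*π)) :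
    (∃ β γ : ℕ → ℝ,
      (∀ i < l, β i ∈ Set.Ico 0 (4*π)) ∧
      (∀ i, 1 ≤ i → i ≤ l - 1 → γ i ∈ Set.Ico 0 (4*π)) ∧
      Rot θ ψ φ =
        Rot 0 0 (β 0) *
          ((List.range (l - 1)).map (fun i => Rot Θ Ψ (γ (i+1)) * Rot 0 0 (β (i+1)))).prod) ↔
    |delta1 θ φ| ≤ (l - 1 : ℕ) * Θ := by
  obtain ⟨hΘ0, hΘ2⟩ := hΘ
  obtain ⟨k, rfl⟩ : ∃ k, l = k + 1 := ⟨l-1, by omega⟩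
  simp only [Nat.add_sub_cancel]
  have hsθ : 0 ≤ Real.sin θ := Real.sin_nonneg_of_nonneg_of_le_pi hθ.1 hθ.2.le
  have habs_y : ‖-Complex.I * (Real.sin (φ/2) : ℂ) * (Real.sin θ : ℂ)
      * Complex.exp (-(Complex.I * (ψ : ℂ)))‖ = |Real.sin (φ/2)| * Real.sin θ := by
    rw [abs_y_Rot, abs_of_nonneg hsθ]
  have hδeq : |delta1 θ φ| = Real.arcsin (‖-Complex.I * (Real.sin (φ/2) : ℂ)
      * (Real.sin θ : ℂ) * Complex.exp (-(Complex.I * (ψ : ℂ)))‖) := by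
    rw [habs_y, delta1_abs θ φ hθ.1 hθ.2.le]
  constructor
  · rintro ⟨β, γ, hβ, hγ, heq⟩
    have hfac : ∀ i < k, IsF (Rot Θ Ψ (γ (i+1)) * Rot 0 0 (β (i+1))) Θ := by
      intro i _
      have := IsF_mul (IsF_Rot (Ψ := Ψ) hΘ0 hΘ2 (γ (i+1))) (IsF_Rz (β (i+1)))
      simpa using this
    have hprod := IsF_prod (fun i => Rot Θ Ψ (γ (i+1)) * Rot 0 0 (β (i+1))) Θ k hfac
    have hall := IsF_mul (IsF_Rz (β 0)) hprod
    rw [← heq] at hall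
    obtain ⟨x', y', hM, hg', hb'⟩ := hall
    have h01 : (-Complex.I * (Real.sin (φ/2) : ℂ) * (Real.sin θ : ℂ)
        * Complex.exp (-(Complex.I * (ψ : ℂ)))) = y' := by
      have e1 := (Rot_eq_Mf θ ψ φ).symm.trans hM
      have e2 := congrFun (congrFun e1 0) 1
      rw [Mf_01, Mf_01] at e2
      exact e2
    rw [hδeq, h01]
    linarith [hb']
  · intro h
    have hb : Real.arcsin (‖-Complex.I * (Real.sin (φ/2) : ℂ) * (Real.sin θ : ℂ)
        * Complex.exp (-(Complex.I * (ψ : ℂ)))‖) ≤ k * Θ := by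
      rw [← hδeq]; exact h
    obtain ⟨β, γ, hβ, hγ, hprod⟩ := key hΘ0 hΘ2 k _ _ (good_Rot θ ψ φ) hb
    refine ⟨β, γ, fun i hi => hβ i (by omega), hγ, ?_⟩
    rw [Rot_eq_Mf θ ψ φ]
    exact hprod
end

section
/- Fix Θ ∈ (0,π/2] and let l be a positive integer. Let θ ∈ [0,π), ψ ∈ [0,π), φ ∈ [0,4π). Then there exist β₀, …, β_{l−1} ∈ [0,4π) and γ₁, …, γ_{l−1} ∈ [0,4π) such that R(θ,ψ,φ) = R(0,0,β₀)·R(Θ,0,γ₁)·R(0,0,β₁)·⋯·R(Θ,0,γ_{l−1})·R(0,0,β_{l−1}) (an alternating z–m–z–…–m–z product of 2l−1 rotations about ẑ and m̂ = (sin Θ, 0, cos Θ), beginning and ending with ẑ) if and only if |δ₁(θ,φ)| ≤ (l−1)·Θ. -/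
open Real

namespace SU2Aux

lemma expI (t : ℝ) : Complex.exp ((t:ℂ) * Complex.I)
    = (Real.cos t : ℂ) + (Real.sin t : ℂ) * Complex.I := by
  rw [Complex.exp_mul_I, Complex.ofReal_cos, Complex.ofReal_sin]

noncomputable def EE (δ : ℝ) : Matrix (Fin 2) (Fin 2) ℂ :=
  !![(Real.cos δ : ℂ), -Complex.I * (Real.sin δ : ℂ);
     -Complex.I * (Real.sin δ : ℂ), (Real.cos δ : ℂ)]

lemma Rz_eq (β : ℝ) : Rot 0 0 β =
    !![Complex.exp ((↑(-β/2):ℂ) * Complex.I), 0; 0, Complex.exp ((↑(β/2):ℂ) * Complex.I)] := by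
  have e1 : Complex.exp ((↑(-β/2):ℂ) * Complex.I)
      = (Real.cos (β/2) : ℂ) - Complex.I * (Real.sin (β/2) : ℂ) := by
    rw [expI, neg_div, Real.cos_neg, Real.sin_neg]; push_cast; ring
  have e2 : Complex.exp ((↑(β/2):ℂ) * Complex.I)
      = (Real.cos (β/2) : ℂ) + Complex.I * (Real.sin (β/2) : ℂ) := by
    rw [expI]; ring
  rw [e1, e2]
  unfold Rot
  ext i j
  fin_cases i <;> fin_cases j <;> simp

lemma Rz_mul (a b : ℝ) : Rot 0 0 a * Rot 0 0 b = Rot 0 0 (a + b) := by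
  rw [Rz_eq, Rz_eq, Rz_eq, Matrix.mul_fin_two, ← Complex.exp_add, ← Complex.exp_add]
  ext i j
  fin_cases i <;> fin_cases j <;> simp <;> (congr 1; push_cast; ring)

lemma Rz_zero : Rot 0 0 (0:ℝ) = 1 := by
  rw [Rz_eq]
  norm_num
  exact Matrix.one_fin_two.symm

lemma EE_mul (a b : ℝ) : EE a * EE b = EE (a + b) := by
  unfold EE
  rw [Matrix.mul_fin_two]
  ext i j
  fin_cases i <;> fin_cases j <;>
    (push_cast [Real.cos_add, Real.sin_add]; simp; ring_nf; try simp [Complex.I_sq]; try ring_nf; try ring)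

lemma EE_zero : EE 0 = 1 := by
  unfold EE; norm_num; exact Matrix.one_fin_two.symm

lemma exp_shift (x : ℝ) (n : ℤ) :
    Complex.exp ((↑(x + n • (2*π)):ℂ) * Complex.I) = Complex.exp ((x:ℂ) * Complex.I) := by
  have : (↑(x + n • (2*π)):ℂ) * Complex.I
      = (x:ℂ) * Complex.I + (n:ℂ) * (2 * ↑π * Complex.I) := by
    push_cast [zsmul_eq_mul]; ring
  rw [this, Complex.exp_add, Complex.exp_int_mul_two_pi_mul_I, mul_one]

lemma Rz_add_zsmul (x : ℝ) (n : ℤ) : Rot 0 0 (x + n • (4*π)) = Rot 0 0 x := by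
  rw [Rz_eq, Rz_eq]
  have h1 : (-(x + n • (4*π))/2 : ℝ) = -x/2 + (-n) • (2*π) := by push_cast [zsmul_eq_mul]; ring
  have h2 : ((x + n • (4*π))/2 : ℝ) = x/2 + n • (2*π) := by push_cast [zsmul_eq_mul]; ring
  rw [h1, h2, exp_shift, exp_shift]


def IsSU2 (M : Matrix (Fin 2) (Fin 2) ℂ) : Prop :=
  M 1 1 = starRingEnd ℂ (M 0 0) ∧ M 1 0 = -starRingEnd ℂ (M 0 1) ∧
  ‖M 0 0‖ ^ 2 + ‖M 0 1‖ ^ 2 = 1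

lemma isSU2_Rot (θ ψ φ : ℝ) : IsSU2 (Rot θ ψ φ) := by
  refine ⟨?_, ?_, ?_⟩
  · simp [Rot, map_sub, map_mul, Complex.conj_I, Complex.conj_ofReal,
      -Complex.ofReal_cos, -Complex.ofReal_sin]
  · simp [Rot, map_mul, Complex.conj_I, Complex.conj_ofReal, ← Complex.exp_conj, map_neg,
      -Complex.ofReal_cos, -Complex.ofReal_sin]
  · simp [Rot, map_mul, Complex.sq_norm, Complex.normSq_apply, Complex.norm_exp, sq_abs, mul_pow,
      -Complex.ofReal_cos, -Complex.ofReal_sin]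
    linear_combination sin_sq_add_cos_sq (φ/2) + sin (φ/2)^2 * sin_sq_add_cos_sq θ

lemma isSU2_mul {A B : Matrix (Fin 2) (Fin 2) ℂ} (hA : IsSU2 A) (hB : IsSU2 B) :
    IsSU2 (A * B) := by
  obtain ⟨hA1, hA2, hA3⟩ := hA
  obtain ⟨hB1, hB2, hB3⟩ := hB
  have e : ∀ i j, (A * B) i j = A i 0 * B 0 j + A i 1 * B 1 j := by
    intro i j; simp [Matrix.mul_apply, Fin.sum_univ_two]
  refine ⟨?_, ?_, ?_⟩
  · rw [e, e, hA1, hA2, hB1, hB2]; simp [map_add, map_mul]; try ring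
  · rw [e, e, hA1, hA2, hB1, hB2]; simp [map_add, map_mul]; try ring
  · rw [e, e, hB1, hB2]
    have key : ∀ z : ℂ, (‖z‖ : ℝ)^2 = (Complex.normSq z) := fun z => Complex.sq_norm z
    rw [key, key] at *
    have h3A : ((Complex.normSq (A 0 0) : ℂ)) + ((Complex.normSq (A 0 1) : ℂ)) = 1 := by
      rw [← Complex.ofReal_add, hA3]; norm_num
    have h3B : ((Complex.normSq (B 0 0) : ℂ)) + ((Complex.normSq (B 0 1) : ℂ)) = 1 := by
      rw [← Complex.ofReal_add, hB3]; norm_num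
    have : ((Complex.normSq (A 0 0 * B 0 0 + A 0 1 * (-(starRingEnd ℂ) (B 0 1))) : ℂ))
        + ((Complex.normSq (A 0 0 * B 0 1 + A 0 1 * ((starRingEnd ℂ) (B 0 0))) : ℂ)) = 1 := by
      rw [← Complex.mul_conj, ← Complex.mul_conj] at *
      simp only [map_add, map_mul, map_neg, Complex.conj_conj]
      linear_combination (B 0 0 * starRingEnd ℂ (B 0 0) + B 0 1 * starRingEnd ℂ (B 0 1)) * h3A
        + h3B
    exact_mod_cast this


noncomputable def dd (M : Matrix (Fin 2) (Fin 2) ℂ) : ℝ := Real.arcsin (‖M 0 1‖)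

lemma dd_nonneg (M) : 0 ≤ dd M := Real.arcsin_nonneg.2 (norm_nonneg _)

lemma abs01_le_one {M : Matrix (Fin 2) (Fin 2) ℂ} (h : IsSU2 M) : ‖M 0 1‖ ≤ 1 := by
  nlinarith [h.2.2, norm_nonneg (M 0 0), norm_nonneg (M 0 1)]

lemma abs00_eq {M : Matrix (Fin 2) (Fin 2) ℂ} (h : IsSU2 M) :
    ‖M 0 0‖ = Real.cos (dd M) := by
  rw [dd, Real.cos_arcsin]
  have h1 : ‖M 0 0‖ ^ 2 = 1 - ‖M 0 1‖ ^ 2 := by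
    linarith [h.2.2]
  rw [← h1, Real.sqrt_sq (norm_nonneg _)]

lemma sin_dd {M : Matrix (Fin 2) (Fin 2) ℂ} (h : IsSU2 M) :
    Real.sin (dd M) = ‖M 0 1‖ := by
  rw [dd, Real.sin_arcsin (by linarith [norm_nonneg (M 0 1)]) (abs01_le_one h)]

lemma dd_mul {A B : Matrix (Fin 2) (Fin 2) ℂ} (hA : IsSU2 A) (hB : IsSU2 B) :
    dd (A * B) ≤ dd A + dd B := by
  have e : (A * B) 0 1 = A 0 0 * B 0 1 + A 0 1 * B 1 1 := by
    simp [Matrix.mul_apply, Fin.sum_univ_two]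
  have habs : ‖(A * B) 0 1‖ ≤ Real.sin (dd A + dd B) := by
    rw [e]
    calc ‖A 0 0 * B 0 1 + A 0 1 * B 1 1‖
        ≤ ‖A 0 0‖ * ‖B 0 1‖ +
          ‖A 0 1‖ * ‖B 1 1‖ := by
          refine le_trans (norm_add_le _ _) ?_
          simp [map_mul]
      _ = Real.cos (dd A) * Real.sin (dd B) + Real.sin (dd A) * Real.cos (dd B) := by
          rw [abs00_eq hA, sin_dd hB, sin_dd hA, hB.1, ← abs00_eq hB]
          simp [map_mul, Complex.norm_conj]
      _ = Real.sin (dd A + dd B) := by rw [Real.sin_add]; ring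
  rcases le_or_gt (π/2) (dd A + dd B) with hle | hlt
  · exact le_trans (Real.arcsin_le_pi_div_two _) hle
  · have : dd (A * B) ≤ Real.arcsin (Real.sin (dd A + dd B)) :=
      Real.monotone_arcsin habs
    rwa [Real.arcsin_sin (by linarith [dd_nonneg A, dd_nonneg B, Real.pi_pos]) hlt.le] at this


lemma neg_I_eq : (-Complex.I) = Complex.exp ((↑(-π/2 : ℝ):ℂ) * Complex.I) := by
  rw [expI]
  simp [neg_div, Real.cos_neg, Real.sin_neg, Real.cos_pi_div_two, Real.sin_pi_div_two]

lemma master (r t x y : ℝ) (h : x + y = t) :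
    (↑r : ℂ) * Complex.exp ((↑t:ℂ) * Complex.I) =
      Complex.exp ((↑x:ℂ) * Complex.I) * ↑r * Complex.exp ((↑y:ℂ) * Complex.I) := by
  rw [show Complex.exp ((↑x:ℂ) * Complex.I) * (↑r:ℂ) * Complex.exp ((↑y:ℂ) * Complex.I)
      = ↑r * (Complex.exp ((↑x:ℂ) * Complex.I) * Complex.exp ((↑y:ℂ) * Complex.I)) from by ring,
    ← Complex.exp_add, ← h]
  congr 2
  push_cast; ring

lemma master' (r t x y : ℝ) (h : x + y - π/2 = t) :
    (↑r : ℂ) * Complex.exp ((↑t:ℂ) * Complex.I) =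
      Complex.exp ((↑x:ℂ) * Complex.I) * (-Complex.I * ↑r) * Complex.exp ((↑y:ℂ) * Complex.I) := by
  rw [neg_I_eq,
    show Complex.exp ((↑x:ℂ) * Complex.I) * (Complex.exp ((↑(-π/2:ℝ):ℂ) * Complex.I) * (↑r:ℂ)) *
        Complex.exp ((↑y:ℂ) * Complex.I)
      = ↑r * (Complex.exp ((↑x:ℂ) * Complex.I) * Complex.exp ((↑(-π/2:ℝ):ℂ) * Complex.I) *
        Complex.exp ((↑y:ℂ) * Complex.I)) from by ring,
    ← Complex.exp_add, ← Complex.exp_add, ← h]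
  congr 2
  push_cast; ring

lemma conj_eq (z : ℂ) :
    (starRingEnd ℂ) z = ↑(‖z‖) * Complex.exp ((↑(-z.arg):ℂ) * Complex.I) := by
  conv_lhs => rw [← Complex.norm_mul_exp_arg_mul_I z]
  rw [map_mul, Complex.conj_ofReal, ← Complex.exp_conj]
  congr 1
  simp [map_mul, Complex.conj_ofReal, Complex.conj_I]

lemma neg_conj_eq (z : ℂ) :
    -(starRingEnd ℂ) z = ↑(‖z‖) * Complex.exp ((↑(-z.arg - π):ℂ) * Complex.I) := by
  rw [conj_eq]
  have h : ((↑(-z.arg - π):ℂ)) * Complex.I = (↑(-z.arg):ℂ) * Complex.I + -(↑π * Complex.I) := by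
    push_cast; ring
  have h2 : Complex.exp (-(↑π * Complex.I)) = -1 := by
    rw [Complex.exp_neg, Complex.exp_pi_mul_I]; norm_num
  rw [h, Complex.exp_add, h2]
  ring

lemma RzEERz (α δ ω : ℝ) : Rot 0 0 α * EE δ * Rot 0 0 ω =
    !![Complex.exp ((↑(-α/2):ℂ) * Complex.I) * ↑(Real.cos δ) * Complex.exp ((↑(-ω/2):ℂ) * Complex.I),
       Complex.exp ((↑(-α/2):ℂ) * Complex.I) * (-Complex.I * ↑(Real.sin δ)) * Complex.exp ((↑(ω/2):ℂ) * Complex.I);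
       Complex.exp ((↑(α/2):ℂ) * Complex.I) * (-Complex.I * ↑(Real.sin δ)) * Complex.exp ((↑(-ω/2):ℂ) * Complex.I),
       Complex.exp ((↑(α/2):ℂ) * Complex.I) * ↑(Real.cos δ) * Complex.exp ((↑(ω/2):ℂ) * Complex.I)] := by
  rw [Rz_eq, Rz_eq]
  unfold EE
  rw [Matrix.mul_fin_two, Matrix.mul_fin_two]
  ext i j
  fin_cases i <;> fin_cases j <;> simp

lemma euler {M : Matrix (Fin 2) (Fin 2) ℂ} (h : IsSU2 M) :
    ∃ a b : ℝ, M = Rot 0 0 a * EE (dd M) * Rot 0 0 b := by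
  refine ⟨-(M 0 0).arg - (M 0 1).arg - π/2, -(M 0 0).arg + (M 0 1).arg + π/2, ?_⟩
  rw [RzEERz]
  have hc : (Real.cos (dd M) : ℂ) = ↑(‖M 0 0‖) := by
    exact_mod_cast congrArg (fun r : ℝ => (r:ℂ)) (abs00_eq h).symm
  have hs : (Real.sin (dd M) : ℂ) = ↑(‖M 0 1‖) := by
    exact_mod_cast congrArg (fun r : ℝ => (r:ℂ)) (sin_dd h)
  ext i j
  fin_cases i <;> fin_cases j
  · show M 0 0 = _
    simp only [Matrix.cons_val', Matrix.cons_val_zero, Matrix.empty_val',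
      Matrix.cons_val_fin_one, Matrix.of_apply]
    rw [hc]
    conv_lhs => rw [← Complex.norm_mul_exp_arg_mul_I (M 0 0)]
    exact master _ _ _ _ (by ring)
  · show M 0 1 = _
    simp only [Matrix.cons_val', Matrix.cons_val_zero, Matrix.cons_val_one, Matrix.head_cons,
      Matrix.empty_val', Matrix.cons_val_fin_one, Matrix.of_apply, Matrix.head_fin_const]
    rw [hs]
    conv_lhs => rw [← Complex.norm_mul_exp_arg_mul_I (M 0 1)]
    exact master' _ _ _ _ (by ring)
  · show M 1 0 = _
    simp only [Matrix.cons_val', Matrix.cons_val_zero, Matrix.cons_val_one, Matrix.head_cons,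
      Matrix.empty_val', Matrix.cons_val_fin_one, Matrix.of_apply, Matrix.head_fin_const]
    rw [hs, h.2.1, neg_conj_eq]
    exact master' _ _ _ _ (by ring)
  · show M 1 1 = _
    simp only [Matrix.cons_val', Matrix.cons_val_zero, Matrix.cons_val_one, Matrix.head_cons,
      Matrix.empty_val', Matrix.cons_val_fin_one, Matrix.of_apply, Matrix.head_fin_const]
    rw [hc, h.1, conj_eq]
    exact master _ _ _ _ (by ring)


lemma abs_Rot01 (θ ψ φ : ℝ) :
    ‖Rot θ ψ φ 0 1‖ = |Real.sin (φ/2)| * |Real.sin θ| := by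
  simp [Rot, map_mul, Complex.norm_real, Complex.norm_exp,
    -Complex.ofReal_sin, -Complex.ofReal_cos]

lemma dd_Rot (θ ψ φ : ℝ) : dd (Rot θ ψ φ) = Real.arcsin (|Real.sin (φ/2)| * |Real.sin θ|) := by
  rw [dd, abs_Rot01]

lemma dd_Rz (β : ℝ) : dd (Rot 0 0 β) = 0 := by
  rw [dd_Rot]; simp

lemma dd_Rm_le {Θ : ℝ} (hΘ1 : 0 < Θ) (hΘ2 : Θ ≤ π/2) (γ : ℝ) : dd (Rot Θ 0 γ) ≤ Θ := by
  rw [dd_Rot]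
  have hsΘ : 0 ≤ Real.sin Θ := Real.sin_nonneg_of_nonneg_of_le_pi hΘ1.le (by linarith [Real.pi_pos])
  have h1 : |Real.sin (γ/2)| * |Real.sin Θ| ≤ Real.sin Θ := by
    rw [abs_of_nonneg hsΘ]
    have h2 : |Real.sin (γ/2)| ≤ 1 := abs_le.2 ⟨Real.neg_one_le_sin _, Real.sin_le_one _⟩
    nlinarith
  calc Real.arcsin (|Real.sin (γ/2)| * |Real.sin Θ|) ≤ Real.arcsin (Real.sin Θ) :=
        Real.monotone_arcsin h1
    _ = Θ := Real.arcsin_sin (by linarith [Real.pi_pos]) hΘ2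

lemma reduce (x : ℝ) : ∃ y, y ∈ Set.Ico 0 (4*π) ∧ Rot 0 0 y = Rot 0 0 x := by
  have hp : (0:ℝ) < 4*π := by positivity
  refine ⟨toIcoMod hp 0 x, by simpa using toIcoMod_mem_Ico' hp x, ?_⟩
  have h : toIcoMod hp 0 x = x + (-(toIcoDiv hp 0 x)) • (4*π) := by
    rw [toIcoMod]; simp [neg_smul, sub_eq_add_neg]
  rw [h, Rz_add_zsmul]

lemma exists_Rm {Θ : ℝ} (hΘ1 : 0 < Θ) (hΘ2 : Θ ≤ π/2) {δ : ℝ} (hδ0 : 0 ≤ δ) (hδΘ : δ ≤ Θ) :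
    ∃ γ, γ ∈ Set.Ico 0 (4*π) ∧ ∃ a b : ℝ,
      EE δ = Rot 0 0 a * (Rot Θ 0 γ * Rot 0 0 b) := by
  have hsΘ : 0 < Real.sin Θ := Real.sin_pos_of_pos_of_lt_pi hΘ1 (by linarith [Real.pi_pos])
  set r := Real.sin δ / Real.sin Θ with hr
  have hδπ : δ ≤ π/2 := le_trans hδΘ hΘ2
  have hsin_le : Real.sin δ ≤ Real.sin Θ :=
    Real.sin_le_sin_of_le_of_le_pi_div_two (by linarith) hΘ2 hδΘ
  have hr0 : 0 ≤ r := div_nonneg (Real.sin_nonneg_of_nonneg_of_le_pi hδ0 (by linarith [Real.pi_pos])) hsΘ.le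
  have hr1 : r ≤ 1 := (div_le_one hsΘ).2 hsin_le
  set γ := 2 * Real.arcsin r with hγ
  have hγ0 : 0 ≤ γ := by
    have := Real.arcsin_nonneg.2 hr0; linarith
  have hγπ : γ ≤ π := by
    have := Real.arcsin_le_pi_div_two r; rw [hγ]; linarith
  have hγIco : γ ∈ Set.Ico 0 (4*π) := ⟨hγ0, by nlinarith [Real.pi_pos]⟩
  have hdd : dd (Rot Θ 0 γ) = δ := by
    rw [dd_Rot]
    have h2 : γ/2 = Real.arcsin r := by rw [hγ]; ring
    have hsin : Real.sin (γ/2) = r := by rw [h2, Real.sin_arcsin (by linarith) hr1]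
    rw [hsin, abs_of_nonneg hr0, abs_of_nonneg hsΘ.le, hr, div_mul_cancel₀ _ (ne_of_gt hsΘ),
      Real.arcsin_sin (by linarith) hδπ]
  obtain ⟨a, b, hab⟩ := euler (isSU2_Rot Θ 0 γ)
  rw [hdd] at hab
  refine ⟨γ, hγIco, -a, -b, ?_⟩
  rw [hab]
  rw [show Rot 0 0 (-a) * (Rot 0 0 a * EE δ * Rot 0 0 b * Rot 0 0 (-b))
      = (Rot 0 0 (-a) * Rot 0 0 a) * EE δ * (Rot 0 0 b * Rot 0 0 (-b)) from by
    simp only [mul_assoc]]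
  rw [Rz_mul, Rz_mul]
  norm_num [Rz_zero]


lemma key {Θ : ℝ} (hΘ1 : 0 < Θ) (hΘ2 : Θ ≤ π/2) :
    ∀ (k : ℕ) (δ α ω : ℝ), 0 ≤ δ → δ ≤ (k:ℝ) * Θ →
    ∃ β γ : ℕ → ℝ,
      (∀ i ≤ k, β i ∈ Set.Ico 0 (4*π)) ∧
      (∀ i, 1 ≤ i → i ≤ k → γ i ∈ Set.Ico 0 (4*π)) ∧
      Rot 0 0 α * EE δ * Rot 0 0 ω =
        Rot 0 0 (β 0) * ((List.range k).map (fun i => Rot Θ 0 (γ (i+1)) * Rot 0 0 (β (i+1)))).prod := by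
  intro k
  induction k with
  | zero =>
    intro δ α ω h0 h1
    have hδ : δ = 0 := le_antisymm (by simpa using h1) h0
    subst hδ
    obtain ⟨y, hy, hyeq⟩ := reduce (α + ω)
    refine ⟨fun _ => y, fun _ => 0, fun i _ => hy, by omega, ?_⟩
    simp only [List.range_zero, List.map_nil, List.prod_nil, mul_one, EE_zero]
    rw [Rz_mul, hyeq]
  | succ k ih =>
    intro δ α ω h0 h1
    set δ' := min δ Θ with hδ'def
    set δ'' := δ - δ' with hδ''def
    have hδ'0 : 0 ≤ δ' := le_min h0 hΘ1.le
    have hδ'Θ : δ' ≤ Θ := min_le_right _ _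
    have hδ''0 : 0 ≤ δ'' := by
      have : δ' ≤ δ := min_le_left _ _
      simp [hδ''def]; linarith
    have hδ''k : δ'' ≤ (k:ℝ) * Θ := by
      rcases le_or_gt δ Θ with hc | hc
      · have : δ' = δ := min_eq_left hc
        rw [hδ''def, this]
        simp
        positivity
      · have : δ' = Θ := min_eq_right hc.le
        rw [hδ''def, this]
        push_cast at h1
        linarith
    obtain ⟨γ1, hγ1, a, b, hsplit⟩ := exists_Rm hΘ1 hΘ2 hδ'0 hδ'Θ
    obtain ⟨β', γ', hβ', hγ', hprod⟩ := ih δ'' b ω hδ''0 hδ''k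
    obtain ⟨y0, hy0, hy0eq⟩ := reduce (α + a)
    refine ⟨fun i => if i = 0 then y0 else β' (i - 1),
            fun i => if i = 1 then γ1 else γ' (i - 1), ?_, ?_, ?_⟩
    · intro i hi
      by_cases h : i = 0
      · simp [h, hy0]
      · simp only [h, if_false]
        exact hβ' (i-1) (by omega)
    · intro i hi1 hik
      by_cases h : i = 1
      · simp [h, hγ1]
      · simp only [h, if_false]
        exact hγ' (i-1) (by omega) (by omega)
    · have hEE : EE δ = EE δ' * EE δ'' := by
        rw [EE_mul]
        congr 1
        rw [hδ''def]; ring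
      have hlist : ((List.range (k+1)).map (fun i =>
          Rot Θ 0 ((fun i => if i = 1 then γ1 else γ' (i - 1)) (i+1)) *
          Rot 0 0 ((fun i => if i = 0 then y0 else β' (i - 1)) (i+1)))).prod
          = (Rot Θ 0 γ1 * Rot 0 0 (β' 0)) *
            ((List.range k).map (fun i => Rot Θ 0 (γ' (i+1)) * Rot 0 0 (β' (i+1)))).prod := by
        rw [List.range_succ_eq_map, List.map_cons, List.prod_cons, List.map_map]
        have hfun : ∀ i ∈ List.range k,
            ((fun i => Rot Θ 0 (if i + 1 = 1 then γ1 else γ' (i + 1 - 1)) *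
               Rot 0 0 (if i + 1 = 0 then y0 else β' (i + 1 - 1))) ∘ Nat.succ) i
            = Rot Θ 0 (γ' (i+1)) * Rot 0 0 (β' (i+1)) := by
          intro i _
          simp only [Function.comp_apply, Nat.succ_eq_add_one]
          have h1 : ¬ (i + 1 + 1 = 1) := by omega
          have h2 : ¬ (i + 1 + 1 = 0) := by omega
          simp [h1, h2]
        rw [List.map_congr_left hfun]
        norm_num
      simp only []
      rw [hlist, hEE, hsplit]
      rw [show Rot 0 0 α * (Rot 0 0 a * (Rot Θ 0 γ1 * Rot 0 0 b) * EE δ'') * Rot 0 0 ω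
          = (Rot 0 0 α * Rot 0 0 a) * (Rot Θ 0 γ1 * (Rot 0 0 b * EE δ'' * Rot 0 0 ω)) from by
        simp only [mul_assoc]]
      rw [hprod, Rz_mul, ← hy0eq]
      simp only [if_true, mul_assoc]


lemma abs_arcsin (x : ℝ) : |Real.arcsin x| = Real.arcsin |x| := by
  rcases le_or_gt 0 x with h | h
  · rw [abs_of_nonneg h, abs_of_nonneg (Real.arcsin_nonneg.2 h)]
  · rw [abs_of_neg h, abs_of_neg (Real.arcsin_lt_zero.2 h), Real.arcsin_neg]

lemma dd_eq_delta (θ ψ φ : ℝ) : dd (Rot θ ψ φ) = |delta1 θ φ| := by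
  rw [dd_Rot, delta1, abs_arcsin, abs_mul, mul_comm]

lemma isSU2_one : IsSU2 (1 : Matrix (Fin 2) (Fin 2) ℂ) := by
  refine ⟨?_, ?_, ?_⟩ <;> simp [Matrix.one_apply]

lemma dd_one : dd (1 : Matrix (Fin 2) (Fin 2) ℂ) = 0 := by
  rw [dd]; simp [Matrix.one_apply]

lemma forward_aux {Θ : ℝ} (hΘ1 : 0 < Θ) (hΘ2 : Θ ≤ π/2) (β γ : ℕ → ℝ) :
    ∀ k : ℕ, IsSU2 (((List.range k).map
        (fun i => Rot Θ 0 (γ (i+1)) * Rot 0 0 (β (i+1)))).prod) ∧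
      dd (((List.range k).map (fun i => Rot Θ 0 (γ (i+1)) * Rot 0 0 (β (i+1)))).prod)
        ≤ (k:ℝ) * Θ := by
  intro k
  induction k with
  | zero => simpa using ⟨isSU2_one, by rw [dd_one]⟩
  | succ k ih =>
    rw [List.range_succ, List.map_append, List.prod_append]
    simp only [List.map_cons, List.map_nil, List.prod_cons, List.prod_nil, mul_one]
    have hblock : IsSU2 (Rot Θ 0 (γ (k+1)) * Rot 0 0 (β (k+1))) :=
      isSU2_mul (isSU2_Rot _ _ _) (isSU2_Rot _ _ _)
    refine ⟨isSU2_mul ih.1 hblock, ?_⟩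
    have h1 : dd (Rot Θ 0 (γ (k+1)) * Rot 0 0 (β (k+1))) ≤ Θ := by
      have := dd_mul (isSU2_Rot Θ 0 (γ (k+1))) (isSU2_Rot 0 0 (β (k+1)))
      have h2 := dd_Rm_le hΘ1 hΘ2 (γ (k+1))
      rw [dd_Rz] at this
      linarith
    have h3 := dd_mul ih.1 hblock
    push_cast
    linarith [ih.2]

end SU2Aux

theorem stmt11 (Θ : ℝ) (hΘ : Θ ∈ Set.Ioc 0 (π/2)) (l : ℕ) (hl : 1 ≤ l)
    (θ ψ φ : ℝ) (hθ : θ ∈ Set.Ico 0 π) (hψ : ψ ∈ Set.Ico 0 π) (hφ : φ ∈ Set.Ico 0 (4*π)) :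
    (∃ β γ : ℕ → ℝ,
      (∀ i < l, β i ∈ Set.Ico 0 (4*π)) ∧
      (∀ i, 1 ≤ i → i ≤ l - 1 → γ i ∈ Set.Ico 0 (4*π)) ∧
      Rot θ ψ φ =
        Rot 0 0 (β 0) *
          ((List.range (l - 1)).map (fun i => Rot Θ 0 (γ (i+1)) * Rot 0 0 (β (i+1)))).prod) ↔
    |delta1 θ φ| ≤ (l - 1 : ℕ) * Θ := by
  obtain ⟨hΘ1, hΘ2⟩ := hΘ
  constructor
  · rintro ⟨β, γ, hβ, hγ, hU⟩
    obtain ⟨hsu, hdd⟩ := SU2Aux.forward_aux hΘ1 hΘ2 β γ (l - 1)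
    have h := SU2Aux.dd_mul (SU2Aux.isSU2_Rot 0 0 (β 0)) hsu
    rw [← hU, SU2Aux.dd_Rz, SU2Aux.dd_eq_delta] at h
    linarith
  · intro h
    obtain ⟨a, b, hab⟩ := SU2Aux.euler (SU2Aux.isSU2_Rot θ ψ φ)
    have h0 : 0 ≤ SU2Aux.dd (Rot θ ψ φ) := SU2Aux.dd_nonneg _
    have hk : SU2Aux.dd (Rot θ ψ φ) ≤ ((l - 1 : ℕ):ℝ) * Θ := by
      rw [SU2Aux.dd_eq_delta]; exact h
    obtain ⟨β, γ, hβ, hγ, hp⟩ := SU2Aux.key hΘ1 hΘ2 (l - 1) (SU2Aux.dd (Rot θ ψ φ)) a b h0 hk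
    exact ⟨β, γ, fun i hi => hβ i (by omega), hγ, by rw [hab, hp]⟩
end

section
/- Fix Θ ∈ (0,π/2] and let l be a positive integer. Let θ ∈ [0,π), ψ ∈ [0,π), φ ∈ [0,4π). Then there exist β₀, …, β_{l−1} ∈ [0,4π) and γ₁, …, γ_{l−1} ∈ [0,4π) such that R(θ,ψ,φ) = R(Θ,0,β₀)·R(0,0,γ₁)·R(Θ,0,β₁)·⋯·R(0,0,γ_{l−1})·R(Θ,0,β_{l−1}) (an alternating m–z–m–…–z–m product of 2l−1 rotations about m̂ = (sin Θ, 0, cos Θ) and ẑ, beginning and ending with m̂) if and only if |δ₂(θ,ψ,φ,Θ)| ≤ (l−1)·Θ. -/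
open Real

/-- δ₂(θ,ψ,φ,Θ). -/
noncomputable def delta2 (θ ψ φ Θ : ℝ) : ℝ :=
  Real.arcsin (Real.sin (φ/2) *
    Real.sqrt ((Real.cos Θ * Real.cos ψ * Real.sin θ - Real.cos θ * Real.sin Θ)^2 +
      (Real.sin θ * Real.sin ψ)^2))

namespace SU2aux
local notation "conj'" => starRingEnd ℂ

noncomputable def M2 (a b : ℂ) : Matrix (Fin 2) (Fin 2) ℂ :=
  !![a, b; -(conj' b), conj' a]

lemma M2_congr {a b c d : ℂ} (h1 : a = c) (h2 : b = d) : M2 a b = M2 c d := by rw [h1, h2]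

lemma M2_mul (a b c d : ℂ) :
    M2 a b * M2 c d = M2 (a*c - b*conj' d) (a*d + b*conj' c) := by
  simp only [M2, Matrix.mul_fin_two, map_add, map_sub, map_mul, Complex.conj_conj]
  congr 1 <;> ring

lemma M2_one : M2 1 0 = 1 := by
  simp [M2, Matrix.one_fin_two]

noncomputable def Dz (β : ℝ) : Matrix (Fin 2) (Fin 2) ℂ :=
  M2 ((Real.cos (β/2) : ℂ) - Complex.I * (Real.sin (β/2) : ℂ)) 0

noncomputable def Am (Θ γ : ℝ) : Matrix (Fin 2) (Fin 2) ℂ :=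
  M2 ((Real.cos (γ/2) : ℂ) - Complex.I * (Real.sin (γ/2) : ℂ) * (Real.cos Θ : ℂ))
     (Complex.I * (Real.sin (γ/2) : ℂ) * (Real.sin Θ : ℂ))

lemma Rot_z_eq (β : ℝ) : Rot 0 0 β = Dz β := by
  simp [Rot, Dz, M2, ← Complex.cos_conj, ← Complex.sin_conj, Complex.conj_ofReal, map_ofNat,
    map_div₀]

lemma Rot_m_eq (Θ β : ℝ) :
    Rot Θ 0 β = M2 ((Real.cos (β/2) : ℂ) - Complex.I * (Real.sin (β/2) : ℂ) * (Real.cos Θ : ℂ))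
      (-Complex.I * (Real.sin (β/2) : ℂ) * (Real.sin Θ : ℂ)) := by
  simp [Rot, M2, ← Complex.cos_conj, ← Complex.sin_conj, Complex.conj_ofReal, map_ofNat, map_div₀]

noncomputable def V (Θ : ℝ) : Matrix (Fin 2) (Fin 2) ℂ :=
  M2 ((Real.cos (Θ/2) : ℂ)) (-(Real.sin (Θ/2) : ℂ))

noncomputable def V' (Θ : ℝ) : Matrix (Fin 2) (Fin 2) ℂ :=
  M2 ((Real.cos (Θ/2) : ℂ)) ((Real.sin (Θ/2) : ℂ))

lemma hpyC (Θ : ℝ) : ((Real.cos (Θ/2) : ℝ) : ℂ)^2 + ((Real.sin (Θ/2) : ℝ) : ℂ)^2 = 1 := by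
  push_cast
  rw [add_comm]
  exact Complex.sin_sq_add_cos_sq _

lemma V'V (Θ : ℝ) : V' Θ * V Θ = 1 := by
  rw [V', V, M2_mul, ← M2_one]
  refine M2_congr ?_ ?_
  · simp only [map_neg, Complex.conj_ofReal]
    linear_combination hpyC Θ
  · simp only [Complex.conj_ofReal]; ring

lemma VV' (Θ : ℝ) : V Θ * V' Θ = 1 := by
  rw [V', V, M2_mul, ← M2_one]
  refine M2_congr ?_ ?_
  · simp only [map_neg, Complex.conj_ofReal]
    linear_combination hpyC Θ
  · simp only [Complex.conj_ofReal]; ring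

lemma cosC (Θ : ℝ) : ((Real.cos Θ : ℝ) : ℂ) = ((Real.cos (Θ/2) : ℝ) : ℂ)^2 - ((Real.sin (Θ/2) : ℝ) : ℂ)^2 := by
  push_cast
  rw [show (Θ:ℂ) = 2 * (↑Θ/2) by ring, Complex.cos_two_mul']
  norm_num

lemma sinC (Θ : ℝ) : ((Real.sin Θ : ℝ) : ℂ) = 2 * ((Real.sin (Θ/2) : ℝ) : ℂ) * ((Real.cos (Θ/2) : ℝ) : ℂ) := by
  push_cast
  rw [show (Θ:ℂ) = 2 * (↑Θ/2) by ring, Complex.sin_two_mul]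
  norm_num

lemma conj_Rm (Θ β : ℝ) : V' Θ * Rot Θ 0 β * V Θ = Dz β := by
  rw [Rot_m_eq, V', V, M2_mul, M2_mul, Dz]
  have hpy := hpyC Θ
  have hcos := cosC Θ
  have hsin := sinC Θ
  refine M2_congr ?_ ?_
  · simp only [map_sub, map_add, map_mul, map_neg, Complex.conj_ofReal, Complex.conj_I,
      Complex.conj_conj]
    rw [hcos, hsin]
    linear_combination ((Real.cos (β/2) : ℂ) - Complex.I*((Real.sin (β/2) : ℂ))*(((Real.cos (Θ/2) : ℝ) : ℂ)^2+((Real.sin (Θ/2) : ℝ) : ℂ)^2+1)) * hpy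
  · simp only [map_sub, map_add, map_mul, map_neg, Complex.conj_ofReal, Complex.conj_I,
      Complex.conj_conj]
    rw [hcos, hsin]
    ring

lemma conj_Rz (Θ γ : ℝ) : V' Θ * Rot 0 0 γ * V Θ = Am Θ γ := by
  rw [Rot_z_eq, Dz, V', V, M2_mul, M2_mul, Am]
  have hpy := hpyC Θ
  have hcos := cosC Θ
  have hsin := sinC Θ
  refine M2_congr ?_ ?_
  · simp only [map_sub, map_add, map_mul, map_neg, map_zero, Complex.conj_ofReal, Complex.conj_I,
      Complex.conj_conj]
    rw [hcos]
    linear_combination ((Real.cos (γ/2) : ℂ)) * hpy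
  · simp only [map_sub, map_add, map_mul, map_neg, map_zero, Complex.conj_ofReal, Complex.conj_I,
      Complex.conj_conj]
    rw [hsin]
    ring

lemma M2_inj {a b c d : ℂ} (h : M2 a b = M2 c d) : a = c ∧ b = d := by
  constructor
  · have := congrArg (fun M => M 0 0) h; simpa [M2] using this
  · have := congrArg (fun M => M 0 1) h; simpa [M2] using this

lemma unit_mul {a b c d : ℂ} (h1 : Complex.normSq a + Complex.normSq b = 1)
    (h2 : Complex.normSq c + Complex.normSq d = 1) :
    Complex.normSq (a*c - b*conj' d) + Complex.normSq (a*d + b*conj' c) = 1 := by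
  have key : ((a*c - b*conj' d) * conj' (a*c - b*conj' d) + (a*d + b*conj' c) * conj' (a*d + b*conj' c) : ℂ)
      = (a * conj' a + b * conj' b) * (c * conj' c + d * conj' d) := by
    simp only [map_add, map_sub, map_mul, Complex.conj_conj]
    ring
  have h1' : (a * conj' a + b * conj' b : ℂ) = 1 := by
    rw [Complex.mul_conj, Complex.mul_conj, ← Complex.ofReal_add, h1, Complex.ofReal_one]
  have h2' : (c * conj' c + d * conj' d : ℂ) = 1 := by
    rw [Complex.mul_conj, Complex.mul_conj, ← Complex.ofReal_add, h2, Complex.ofReal_one]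
  rw [h1', h2', mul_one, Complex.mul_conj, Complex.mul_conj, ← Complex.ofReal_add] at key
  exact_mod_cast key

lemma unit_Dz (β : ℝ) :
    Complex.normSq ((Real.cos (β/2) : ℂ) - Complex.I * (Real.sin (β/2) : ℂ)) + Complex.normSq (0:ℂ) = 1 := by
  simp [Complex.normSq_apply, -Complex.ofReal_cos, -Complex.ofReal_sin]
  nlinarith [sin_sq_add_cos_sq (β/2)]

lemma unit_Am (Θ γ : ℝ) :
    Complex.normSq ((Real.cos (γ/2) : ℂ) - Complex.I * (Real.sin (γ/2) : ℂ) * (Real.cos Θ : ℂ)) +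
      Complex.normSq (Complex.I * (Real.sin (γ/2) : ℂ) * (Real.sin Θ : ℂ)) = 1 := by
  simp [Complex.normSq_apply, -Complex.ofReal_cos, -Complex.ofReal_sin]
  nlinarith [sin_sq_add_cos_sq (γ/2), sin_sq_add_cos_sq Θ]

lemma abs_b_le_one {a b : ℂ} (h : Complex.normSq a + Complex.normSq b = 1) :
    ‖b‖ ≤ 1 := by
  rw [Complex.norm_def]
  rw [show (1:ℝ) = Real.sqrt 1 by simp]
  apply Real.sqrt_le_sqrt
  nlinarith [Complex.normSq_nonneg a]

lemma abs_a_eq_cos {a b : ℂ} (h : Complex.normSq a + Complex.normSq b = 1) :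
    ‖a‖ = Real.cos (arcsin (‖b‖)) := by
  rw [Real.cos_arcsin, Complex.sq_norm, Complex.norm_def]
  congr 1
  linarith

lemma subadd {a b c d : ℂ} (h1 : Complex.normSq a + Complex.normSq b = 1)
    (h2 : Complex.normSq c + Complex.normSq d = 1) :
    arcsin (‖(a*d + b*conj' c)‖) ≤ arcsin (‖b‖) + arcsin (‖d‖) := by
  set δ1 := arcsin (‖b‖) with hδ1
  set δ2 := arcsin (‖d‖) with hδ2
  have h01 : 0 ≤ δ1 := Real.arcsin_nonneg.2 (norm_nonneg b)
  have h02 : 0 ≤ δ2 := Real.arcsin_nonneg.2 (norm_nonneg d)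
  have hs1 : Real.sin δ1 = ‖b‖ := Real.sin_arcsin (by linarith [norm_nonneg b]) (abs_b_le_one h1)
  have hs2 : Real.sin δ2 = ‖d‖ := Real.sin_arcsin (by linarith [norm_nonneg d]) (abs_b_le_one h2)
  have h3 : ‖(a*d + b*conj' c)‖ ≤ ‖a‖ * ‖d‖ + ‖b‖ * ‖c‖ := by
    calc ‖(a*d + b*conj' c)‖ ≤ ‖(a*d)‖ + ‖(b*conj' c)‖ :=
          norm_add_le _ _
      _ = ‖a‖ * ‖d‖ + ‖b‖ * ‖c‖ := by simp [map_mul]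
  have habs : ‖(a*d + b*conj' c)‖ ≤ Real.sin (δ1 + δ2) := by
    rw [Real.sin_add, hs1, hs2, ← abs_a_eq_cos h1, ← abs_a_eq_cos h2]
    linarith
  calc arcsin (‖(a*d + b*conj' c)‖) ≤ arcsin (Real.sin (δ1 + δ2)) :=
        Real.monotone_arcsin habs
    _ ≤ δ1 + δ2 := by
        rcases le_or_gt (δ1 + δ2) (π/2) with h | h
        · rw [Real.arcsin_sin (by linarith [Real.pi_pos]) h]
        · linarith [Real.arcsin_le_pi_div_two (Real.sin (δ1 + δ2))]

/-- Necessity: any admissible product is an M2 pair with arcsin |b| ≤ kΘ. -/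
lemma prod_decomp (Θ : ℝ) (hΘ1 : 0 < Θ) (hΘ2 : Θ ≤ π/2) (k : ℕ) (β γ : ℕ → ℝ) :
    ∃ a b : ℂ, Complex.normSq a + Complex.normSq b = 1 ∧
      arcsin (‖b‖) ≤ k * Θ ∧
      Dz (β 0) * ((List.range k).map (fun i => Am Θ (γ (i+1)) * Dz (β (i+1)))).prod = M2 a b := by
  induction k with
  | zero =>
      refine ⟨_, _, unit_Dz (β 0), ?_, by simp [Dz]⟩
      simp
  | succ k ih =>
      obtain ⟨a, b, hu, hle, hP⟩ := ih
      rw [List.range_succ, List.map_append, List.prod_append]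
      simp only [List.map_cons, List.map_nil, List.prod_cons, List.prod_nil, mul_one]
      have hstep : Am Θ (γ (k+1)) * Dz (β (k+1)) =
          M2 (((Real.cos (γ (k+1)/2) : ℂ) - Complex.I * (Real.sin (γ (k+1)/2) : ℂ) * (Real.cos Θ : ℂ)) *
              ((Real.cos (β (k+1)/2) : ℂ) - Complex.I * (Real.sin (β (k+1)/2) : ℂ)))
             ((Complex.I * (Real.sin (γ (k+1)/2) : ℂ) * (Real.sin Θ : ℂ)) *
              conj' ((Real.cos (β (k+1)/2) : ℂ) - Complex.I * (Real.sin (β (k+1)/2) : ℂ))) := by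
        rw [Am, Dz, M2_mul]
        exact M2_congr (by simp) (by simp)
      have hABu : Complex.normSq (((Real.cos (γ (k+1)/2) : ℂ) - Complex.I * (Real.sin (γ (k+1)/2) : ℂ) * (Real.cos Θ : ℂ)) *
              ((Real.cos (β (k+1)/2) : ℂ) - Complex.I * (Real.sin (β (k+1)/2) : ℂ))) +
          Complex.normSq ((Complex.I * (Real.sin (γ (k+1)/2) : ℂ) * (Real.sin Θ : ℂ)) *
              conj' ((Real.cos (β (k+1)/2) : ℂ) - Complex.I * (Real.sin (β (k+1)/2) : ℂ))) = 1 := by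
        have h1 := unit_Am Θ (γ (k+1))
        have h2 := unit_Dz (β (k+1))
        simp only [Complex.normSq_mul, Complex.normSq_conj]
        have hz : Complex.normSq (0:ℂ) = 0 := by simp
        rw [hz, add_zero] at h2
        rw [h2, mul_one, mul_one]
        simpa [hz] using h1
      have habse : ‖((Real.cos (β (k+1)/2) : ℂ) - Complex.I * (Real.sin (β (k+1)/2) : ℂ))‖ = 1 := by
        have h2 := unit_Dz (β (k+1))
        have hz : Complex.normSq (0:ℂ) = 0 := by simp
        rw [hz, add_zero] at h2
        rw [Complex.norm_def, h2, Real.sqrt_one]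
      have hB : arcsin (‖((Complex.I * (Real.sin (γ (k+1)/2) : ℂ) * (Real.sin Θ : ℂ)) *
              conj' ((Real.cos (β (k+1)/2) : ℂ) - Complex.I * (Real.sin (β (k+1)/2) : ℂ)))‖) ≤ Θ := by
        rw [norm_mul, Complex.norm_conj, habse, mul_one]
        have hsinΘ : (0:ℝ) ≤ Real.sin Θ := Real.sin_nonneg_of_nonneg_of_le_pi (le_of_lt hΘ1) (by linarith [Real.pi_pos])
        have : ‖(Complex.I * (Real.sin (γ (k+1)/2) : ℂ) * (Real.sin Θ : ℂ))‖ ≤ Real.sin Θ := by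
          simp only [norm_mul, Complex.norm_I, one_mul, Complex.norm_real, Real.norm_eq_abs]
          rw [abs_of_nonneg hsinΘ]
          nlinarith [abs_nonneg (Real.sin (γ (k+1)/2)), Real.abs_sin_le_one (γ (k+1)/2)]
        calc arcsin (‖(Complex.I * (Real.sin (γ (k+1)/2) : ℂ) * (Real.sin Θ : ℂ))‖)
            ≤ arcsin (Real.sin Θ) := Real.monotone_arcsin this
          _ = Θ := Real.arcsin_sin (by linarith [Real.pi_pos]) (by linarith)
      rw [hstep, ← mul_assoc, hP, M2_mul]
      refine ⟨_, _, unit_mul hu hABu, ?_, rfl⟩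
      have := subadd hu hABu
      have hcast : ((k+1 : ℕ) : ℝ) * Θ = (k:ℝ) * Θ + Θ := by push_cast; ring
      rw [hcast]
      linarith




lemma cos_sub_I_sin (t : ℝ) :
    ((Real.cos t : ℂ) - Complex.I * (Real.sin t : ℂ)) = Complex.exp (↑(-t) * Complex.I) := by
  rw [Complex.exp_mul_I]
  push_cast
  rw [Complex.cos_neg, Complex.sin_neg, ← Complex.ofReal_cos, ← Complex.ofReal_sin]
  ring

lemma exists_angle {z : ℂ} (hz : ‖z‖ = 1) :
    ∃ β ∈ Set.Ico (0:ℝ) (4*π), ((Real.cos (β/2) : ℂ) - Complex.I * (Real.sin (β/2) : ℂ)) = z := by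
  have hexp : Complex.exp (↑z.arg * Complex.I) = z := by
    have := Complex.norm_mul_exp_arg_mul_I z
    rwa [hz, Complex.ofReal_one, one_mul] at this
  have hpi : (0:ℝ) < π := Real.pi_pos
  rcases le_or_gt z.arg 0 with h | h
  · refine ⟨-2 * z.arg, ⟨by nlinarith, by nlinarith [Complex.neg_pi_lt_arg z]⟩, ?_⟩
    rw [cos_sub_I_sin, show (↑(-(-2 * z.arg / 2)) : ℂ) = ↑z.arg by push_cast; ring]
    exact hexp
  · refine ⟨4*π - 2 * z.arg, ⟨by nlinarith [Complex.arg_le_pi z], by nlinarith⟩, ?_⟩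
    rw [cos_sub_I_sin, show (↑(-((4*π - 2 * z.arg) / 2)) : ℂ) * Complex.I
        = ↑z.arg * Complex.I + (-1) * (2*π*Complex.I) by push_cast; ring,
      Complex.exp_add, hexp]
    rw [show ((-1 : ℂ)) * (2*π*Complex.I) = (-1 : ℤ) * (2*π*Complex.I) by norm_num,
      Complex.exp_int_mul_two_pi_mul_I]
    ring

set_option maxHeartbeats 1000000 in
/-- Key step: peel off one Dz · Am factor decreasing arcsin |b| by min(δ, Θ). -/
lemma step_lemma (Θ : ℝ) (hΘ1 : 0 < Θ) (hΘ2 : Θ ≤ π/2) {a b : ℂ}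
    (hu : Complex.normSq a + Complex.normSq b = 1) :
    ∃ β₀ ∈ Set.Ico (0:ℝ) (4*π), ∃ γ₁ ∈ Set.Ico (0:ℝ) (4*π), ∃ a'' b'' : ℂ,
      Complex.normSq a'' + Complex.normSq b'' = 1 ∧
      arcsin (‖b''‖) =
        arcsin (‖b‖) - min (arcsin (‖b‖)) Θ ∧
      M2 a b = Dz β₀ * Am Θ γ₁ * M2 a'' b'' := by
  have hπ : (0:ℝ) < π := Real.pi_pos
  set δ := arcsin (‖b‖) with hδdef
  have hδ0 : 0 ≤ δ := Real.arcsin_nonneg.2 (norm_nonneg b)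
  have hδπ : δ ≤ π/2 := Real.arcsin_le_pi_div_two _
  set μ := min δ Θ with hμdef
  have hμ0 : 0 ≤ μ := le_min hδ0 (le_of_lt hΘ1)
  have hμΘ : μ ≤ Θ := min_le_right _ _
  have hμδ : μ ≤ δ := min_le_left _ _
  have hμπ : μ ≤ π/2 := le_trans hμΘ hΘ2
  have hsinΘ : 0 < Real.sin Θ := Real.sin_pos_of_pos_of_lt_pi hΘ1 (by linarith)
  have hsinμ0 : 0 ≤ Real.sin μ := Real.sin_nonneg_of_nonneg_of_le_pi hμ0 (by linarith)
  have hsinle : Real.sin μ ≤ Real.sin Θ :=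
    Real.sin_le_sin_of_le_of_le_pi_div_two (by linarith) hΘ2 hμΘ
  set x := Real.sin μ / Real.sin Θ with hxdef
  have hx0 : 0 ≤ x := div_nonneg hsinμ0 (le_of_lt hsinΘ)
  have hx1 : x ≤ 1 := (div_le_one hsinΘ).2 hsinle
  set γ₁ := 2 * arcsin x with hγdef
  have hγmem : γ₁ ∈ Set.Ico (0:ℝ) (4*π) := by
    constructor
    · have := Real.arcsin_nonneg.2 hx0; linarith
    · have := Real.arcsin_le_pi_div_two x; linarith
  have hγhalf : γ₁ / 2 = arcsin x := by rw [hγdef]; ring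
  set s := Real.sin (γ₁/2) with hsdef
  set c := Real.cos (γ₁/2) with hcdef
  have hs : s = x := by rw [hsdef, hγhalf, Real.sin_arcsin (by linarith) hx1]
  have hc0 : 0 ≤ c := by
    rw [hcdef, hγhalf]
    exact Real.cos_nonneg_of_mem_Icc ⟨Real.neg_pi_div_two_le_arcsin x, Real.arcsin_le_pi_div_two x⟩
  have hcs : c^2 + s^2 = 1 := by
    rw [hcdef, hsdef]; nlinarith [Real.sin_sq_add_cos_sq (γ₁/2)]
  have hssin : s * Real.sin Θ = Real.sin μ := by
    rw [hs, hxdef]; field_simp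
  have hkey : c^2 + s^2 * Real.cos Θ ^2 = 1 - Real.sin μ ^ 2 := by
    have h1 : s^2 * Real.sin Θ ^ 2 = Real.sin μ ^2 := by
      linear_combination (s * Real.sin Θ + Real.sin μ) * hssin
    linear_combination hcs - h1 + s^2 * Real.sin_sq_add_cos_sq Θ
  have hcosμ : 0 ≤ Real.cos μ := Real.cos_nonneg_of_mem_Icc ⟨by linarith, hμπ⟩
  have hcos2μ : Real.cos μ ^ 2 = 1 - Real.sin μ ^2 := by
    linear_combination Real.sin_sq_add_cos_sq μ
  have habsb : ‖b‖ = Real.sin δ := by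
    rw [hδdef, Real.sin_arcsin (by linarith [norm_nonneg b]) (abs_b_le_one hu)]
  have habsa : ‖a‖ = Real.cos δ := abs_a_eq_cos hu
  -- the complex algebra
  set A : ℂ := (c : ℂ) + Complex.I * (s:ℂ) * (Real.cos Θ : ℂ) with hAdef
  have hnormA : Complex.normSq A = 1 - Real.sin μ ^2 := by
    have hA' : A = ((c:ℝ):ℂ) + ((s*Real.cos Θ : ℝ):ℂ)*Complex.I := by
      rw [hAdef]; push_cast; ring
    rw [hA', Complex.normSq_add_mul_I]
    linear_combination hkey
  have habsA : ‖A‖ = Real.cos μ := by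
    rw [Complex.norm_def, hnormA, ← hcos2μ, Real.sqrt_sq hcosμ]
  set w : ℂ := Complex.I * A * a * b with hwdef
  have habsw : ‖w‖ = Real.cos μ * (Real.cos δ * Real.sin δ) := by
    rw [hwdef]
    simp only [norm_mul, Complex.norm_I, one_mul, habsA, habsa, habsb]
    ring
  -- choice of the unit e with (conj e)^2 * w = -|w|
  obtain ⟨e, habse, he2⟩ : ∃ e : ℂ, ‖e‖ = 1 ∧
      (conj' e)^2 * w = -((‖w‖ : ℝ) : ℂ) := by
    by_cases hw0 : w = 0
    · exact ⟨1, by simp, by simp [hw0]⟩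
    · have habswpos : 0 < ‖w‖ := norm_pos_iff.mpr hw0
      set u : ℂ := -conj' w / ((‖w‖ : ℝ) : ℂ) with hudef
      have habsu : ‖u‖ = 1 := by
        rw [hudef, norm_div, norm_neg, Complex.norm_conj, Complex.norm_real, Real.norm_eq_abs,
          abs_of_pos habswpos, div_self (ne_of_gt habswpos)]
      have hu0 : u ≠ 0 := by
        intro h; rw [h] at habsu; simp at habsu
      refine ⟨conj' (Complex.exp (Complex.log u / 2)), ?_, ?_⟩
      · rw [Complex.norm_conj, Complex.norm_exp]
        have : (Complex.log u / 2).re = Real.log (‖u‖) / 2 := by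
          rw [Complex.div_re]
          simp [Complex.log_re]
          ring
        rw [this, habsu, Real.log_one]
        norm_num
      · rw [Complex.conj_conj]
        have hsq : Complex.exp (Complex.log u / 2) ^ 2 = u := by
          rw [sq, ← Complex.exp_add]
          rw [show Complex.log u / 2 + Complex.log u / 2 = Complex.log u by ring]
          exact Complex.exp_log hu0
        rw [hsq, hudef]
        have hwconj : conj' w * w = ((‖w‖ ^ 2 : ℝ) : ℂ) := by
          rw [mul_comm, Complex.mul_conj, Complex.sq_norm]
        have hne : ((‖w‖ : ℝ) : ℂ) ≠ 0 := by
          exact_mod_cast ne_of_gt habswpos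
        rw [div_mul_eq_mul_div, div_eq_iff hne]
        have hcast : ((‖w‖ : ℝ):ℂ) * ((‖w‖ : ℝ):ℂ)
            = ((‖w‖ ^2 : ℝ):ℂ) := by push_cast; ring
        linear_combination -hwconj + hcast
  have hee : e * conj' e = 1 := by
    rw [Complex.mul_conj, Complex.normSq_eq_norm_sq, habse]; norm_num
  -- the pair (P, Q)
  set P : ℂ := e * ((c : ℂ) - Complex.I * (s:ℂ) * (Real.cos Θ : ℂ)) with hPdef
  set Q : ℂ := e * (Complex.I * (s:ℂ) * (Real.sin Θ : ℂ)) with hQdef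
  have hnormSqe : Complex.normSq e = 1 := by rw [Complex.normSq_eq_norm_sq, habse]; norm_num
  have hnormP : Complex.normSq P = 1 - Real.sin μ ^ 2 := by
    rw [hPdef, Complex.normSq_mul, hnormSqe, one_mul]
    have h' : ((c:ℝ):ℂ) - Complex.I * (s:ℂ) * (Real.cos Θ : ℂ)
        = ((c:ℝ):ℂ) + ((-(s*Real.cos Θ) : ℝ):ℂ)*Complex.I := by push_cast; ring
    rw [h', Complex.normSq_add_mul_I]
    linear_combination hkey
  have hnormQ : Complex.normSq Q = Real.sin μ ^ 2 := by
    rw [hQdef, Complex.normSq_mul, hnormSqe, one_mul]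
    have h' : Complex.I * (s:ℂ) * (Real.sin Θ : ℂ)
        = ((0:ℝ):ℂ) + ((s*Real.sin Θ : ℝ):ℂ)*Complex.I := by push_cast; ring
    rw [h', Complex.normSq_add_mul_I]
    linear_combination (s*Real.sin Θ + Real.sin μ) * hssin
  have hPQu : Complex.normSq P + Complex.normSq Q = 1 := by
    rw [hnormP, hnormQ]; ring
  have hPQC : P * conj' P + Q * conj' Q = 1 := by
    rw [Complex.mul_conj, Complex.mul_conj, ← Complex.ofReal_add, hPQu, Complex.ofReal_one]
  set a'' : ℂ := conj' P * a + Q * conj' b with ha''def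
  set b'' : ℂ := conj' P * b - Q * conj' a with hb''def
  have hu'' : Complex.normSq a'' + Complex.normSq b'' = 1 := by
    have h1 : Complex.normSq (conj' P) + Complex.normSq (-Q) = 1 := by
      rw [Complex.normSq_conj, Complex.normSq_neg]; exact hPQu
    have := unit_mul h1 hu
    rw [ha''def, hb''def]
    convert this using 3 <;> ring
  -- cross term
  have hcross : (conj' P * b) * conj' (Q * conj' a) =
      ((s * Real.sin Θ * ‖w‖ : ℝ) : ℂ) := by
    rw [hPdef, hQdef]
    simp only [map_mul, map_sub, Complex.conj_conj, Complex.conj_ofReal, Complex.conj_I]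
    rw [Complex.ofReal_mul, Complex.ofReal_mul]
    linear_combination (-((s:ℝ):ℂ)*((Real.sin Θ : ℝ) : ℂ)) * he2
  have hnormb'' : Complex.normSq b'' = Real.sin (δ - μ) ^ 2 := by
    rw [hb''def, Complex.normSq_sub, Complex.normSq_mul, Complex.normSq_mul,
      Complex.normSq_conj, Complex.normSq_conj, hnormP, hnormQ, hcross]
    rw [Complex.ofReal_re]
    have hnb : Complex.normSq b = Real.sin δ ^2 := by
      rw [← Complex.sq_norm, habsb]
    have hna : Complex.normSq a = Real.cos δ ^2 := by
      rw [← Complex.sq_norm, habsa]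
    rw [hnb, hna, habsw, Real.sin_sub]
    linear_combination (-(Real.sin δ^2)) * hcos2μ + (-(2*Real.cos μ*Real.cos δ*Real.sin δ)) * hssin
  have habsb'' : ‖b''‖ = Real.sin (δ - μ) := by
    rw [Complex.norm_def, hnormb'', Real.sqrt_sq
      (Real.sin_nonneg_of_nonneg_of_le_pi (by linarith) (by linarith))]
  have harcsinb'' : arcsin (‖b''‖) = δ - μ := by
    rw [habsb'', Real.arcsin_sin (by linarith) (by linarith)]
  -- the angle β₀
  obtain ⟨β₀, hβ₀mem, hβ₀⟩ := exists_angle habse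
  refine ⟨β₀, hβ₀mem, γ₁, hγmem, a'', b'', hu'', harcsinb'', ?_⟩
  have hDz : Dz β₀ = M2 e 0 := by rw [Dz, hβ₀]
  have hDA : Dz β₀ * Am Θ γ₁ = M2 P Q := by
    rw [hDz, Am, M2_mul]
    refine M2_congr ?_ ?_
    · rw [hPdef, hsdef, hcdef]; ring
    · rw [hQdef, hsdef]; ring
  rw [hDA, M2_mul]
  refine M2_congr ?_ ?_
  · rw [ha''def, hb''def]
    simp only [map_sub, map_add, map_mul, Complex.conj_conj]
    linear_combination (-a) * hPQC
  · rw [ha''def, hb''def]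
    simp only [map_sub, map_add, map_mul, Complex.conj_conj]
    linear_combination (-b) * hPQC


lemma arcsin_abs (t : ℝ) : |arcsin t| = arcsin |t| := by
  rcases le_or_gt 0 t with h | h
  · rw [abs_of_nonneg h, abs_of_nonneg (Real.arcsin_nonneg.2 h)]
  · rw [abs_of_neg h, abs_of_nonpos ?_, ← Real.arcsin_neg]
    rw [← Real.arcsin_zero]
    exact Real.monotone_arcsin h.le

/-- Sufficiency -/
lemma suffic (Θ : ℝ) (hΘ1 : 0 < Θ) (hΘ2 : Θ ≤ π/2) : ∀ (k : ℕ) (a b : ℂ),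
    Complex.normSq a + Complex.normSq b = 1 → arcsin (‖b‖) ≤ (k : ℝ) * Θ →
    ∃ β γ : ℕ → ℝ, (∀ i < k + 1, β i ∈ Set.Ico (0:ℝ) (4*π)) ∧
      (∀ i, 1 ≤ i → i ≤ k → γ i ∈ Set.Ico (0:ℝ) (4*π)) ∧
      M2 a b = Dz (β 0) * ((List.range k).map (fun i => Am Θ (γ (i+1)) * Dz (β (i+1)))).prod := by
  intro k
  induction k with
  | zero =>
      intro a b hu hle
      have h0 : arcsin (‖b‖) = 0 := le_antisymm (by simpa using hle)
        (Real.arcsin_nonneg.2 (norm_nonneg b))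
      have hb : b = 0 := by
        have := Real.arcsin_eq_zero_iff.1 h0
        exact norm_eq_zero.1 this
      have ha : ‖a‖ = 1 := by
        rw [hb] at hu; simp at hu
        rw [Complex.norm_def, hu, Real.sqrt_one]
      obtain ⟨β₀, hβ₀mem, hβ₀⟩ := exists_angle ha
      refine ⟨fun _ => β₀, fun _ => 0, fun i _ => hβ₀mem, ?_, ?_⟩
      · intro i h1 h2
        exact absurd (h1.trans h2) (by norm_num)
      · simp only [List.range_zero, List.map_nil, List.prod_nil, mul_one]
        rw [Dz, hβ₀, hb]
      
  | succ k ih =>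
      intro a b hu hle
      obtain ⟨β₀, hβ₀mem, γ₁, hγ₁mem, a'', b'', hu'', harc, hprod⟩ :=
        step_lemma Θ hΘ1 hΘ2 hu
      have hb''le : arcsin (‖b''‖) ≤ (k : ℝ) * Θ := by
        rw [harc]
        rcases min_cases (arcsin (‖b‖)) Θ with ⟨hmin, hc⟩ | ⟨hmin, hc⟩
        · rw [hmin]
          simp only [sub_self]
          positivity
        · rw [hmin]
          push_cast at hle
          linarith
      obtain ⟨β', γ', hβ', hγ', hM⟩ := ih a'' b'' hu'' hb''le
      refine ⟨fun i => if i = 0 then β₀ else β' (i-1),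
              fun i => if i = 1 then γ₁ else γ' (i-1), ?_, ?_, ?_⟩
      · intro i hi
        by_cases h0 : i = 0
        · simpa [h0] using hβ₀mem
        · simp only [h0, if_false]
          exact hβ' _ (by omega)
      · intro i h1 h2
        by_cases h0 : i = 1
        · simpa [h0] using hγ₁mem
        · simp only [h0, if_false]
          exact hγ' _ (by omega) (by omega)
      · simp only [if_pos rfl]
        rw [List.range_succ_eq_map, List.map_cons, List.prod_cons, List.map_map]
        have hmapeq : (List.range k).map
            ((fun i => Am Θ ((if i+1 = 1 then γ₁ else γ' (i+1-1))) *
              Dz ((if i+1 = 0 then β₀ else β' (i+1-1)))) ∘ Nat.succ) =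
            (List.range k).map (fun i => Am Θ (γ' (i+1)) * Dz (β' (i+1))) := by
          apply List.map_congr_left
          intro i _
          simp only [Function.comp]
          norm_num
        simp only [Nat.add_eq, Nat.add_zero] at hmapeq ⊢
        rw [hmapeq]
        have h1 : (0:ℕ) + 1 = 1 := rfl
        norm_num
        rw [hprod, hM]
        simp only [mul_assoc]

lemma Rot_eq (θ ψ φ : ℝ) :
    Rot θ ψ φ = M2 ((Real.cos (φ/2) : ℂ) - Complex.I * (Real.sin (φ/2) : ℂ) * (Real.cos θ : ℂ))
      (-Complex.I * (Real.sin (φ/2) : ℂ) * (Real.sin θ : ℂ) * Complex.exp (-(Complex.I * (ψ : ℂ)))) := by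
  simp [Rot, M2, ← Complex.exp_conj, ← Complex.cos_conj, ← Complex.sin_conj, map_div₀,
    map_ofNat, Complex.conj_ofReal, Complex.conj_I]

lemma hexp1 (ψ : ℝ) : Complex.exp (-(Complex.I * (ψ:ℂ))) =
    (Real.cos ψ : ℂ) - Complex.I * (Real.sin ψ : ℂ) := by
  rw [cos_sub_I_sin]
  congr 1
  push_cast
  ring

lemma hexp2 (ψ : ℝ) : Complex.exp (Complex.I * (ψ:ℂ)) =
    (Real.cos ψ : ℂ) + Complex.I * (Real.sin ψ : ℂ) := by
  have h := hexp1 (-ψ)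
  push_cast at h
  rw [show Complex.I * (ψ:ℂ) = -(Complex.I * (-ψ:ℂ)) by ring, h,
    Complex.cos_neg, Complex.sin_neg]
  push_cast
  ring

lemma unit_Rot (θ ψ φ : ℝ) :
    Complex.normSq ((Real.cos (φ/2) : ℂ) - Complex.I * (Real.sin (φ/2) : ℂ) * (Real.cos θ : ℂ)) +
    Complex.normSq (-Complex.I * (Real.sin (φ/2) : ℂ) * (Real.sin θ : ℂ) *
      Complex.exp (-(Complex.I * (ψ : ℂ)))) = 1 := by
  have h1 : Complex.normSq (Complex.exp (-(Complex.I * (ψ:ℂ)))) = 1 := by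
    rw [← Complex.sq_norm, Complex.norm_exp]
    simp
  rw [Complex.normSq_mul, h1, mul_one]
  have h2 : ((Real.cos (φ/2) : ℂ) - Complex.I * (Real.sin (φ/2) : ℂ) * (Real.cos θ : ℂ))
      = ((Real.cos (φ/2) : ℝ) : ℂ) + ((-(Real.sin (φ/2) * Real.cos θ) : ℝ) : ℂ) * Complex.I := by
    push_cast; ring
  have h3 : (-Complex.I * (Real.sin (φ/2) : ℂ) * (Real.sin θ : ℂ))
      = ((0 : ℝ) : ℂ) + ((-(Real.sin (φ/2) * Real.sin θ) : ℝ) : ℂ) * Complex.I := by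
    push_cast; ring
  rw [h2, h3, Complex.normSq_add_mul_I, Complex.normSq_add_mul_I]
  linear_combination Real.sin_sq_add_cos_sq (φ/2) + Real.sin (φ/2)^2 * Real.sin_sq_add_cos_sq θ

lemma unit_V (Θ : ℝ) :
    Complex.normSq ((Real.cos (Θ/2) : ℂ)) + Complex.normSq ((Real.sin (Θ/2) : ℂ)) = 1 := by
  simp only [Complex.normSq_ofReal]
  nlinarith [Real.sin_sq_add_cos_sq (Θ/2)]

lemma unit_V2 (Θ : ℝ) :
    Complex.normSq ((Real.cos (Θ/2) : ℂ)) + Complex.normSq (-(Real.sin (Θ/2) : ℂ)) = 1 := by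
  rw [Complex.normSq_neg]; exact unit_V Θ

set_option maxHeartbeats 1000000 in
lemma conjW (Θ θ ψ φ : ℝ) : ∃ aW bW : ℂ, V' Θ * Rot θ ψ φ * V Θ = M2 aW bW ∧
    Complex.normSq aW + Complex.normSq bW = 1 ∧
    ‖bW‖ = |Real.sin (φ/2)| *
      Real.sqrt ((Real.cos Θ * Real.cos ψ * Real.sin θ - Real.cos θ * Real.sin Θ)^2 +
        (Real.sin θ * Real.sin ψ)^2) := by
  rw [Rot_eq, V', V, M2_mul, M2_mul]
  refine ⟨_, _, rfl, unit_mul (unit_mul (unit_V Θ) (unit_Rot θ ψ φ)) (unit_V2 Θ), ?_⟩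
  set x : ℝ := Real.cos Θ * Real.cos ψ * Real.sin θ - Real.cos θ * Real.sin Θ with hx
  set y : ℝ := Real.sin θ * Real.sin ψ with hy
  have hnice : ((Real.cos (Θ/2) : ℂ) *
        ((Real.cos (φ/2) : ℂ) - Complex.I * (Real.sin (φ/2) : ℂ) * (Real.cos θ : ℂ)) -
        (Real.sin (Θ/2) : ℂ) * conj' (-Complex.I * (Real.sin (φ/2) : ℂ) * (Real.sin θ : ℂ) *
          Complex.exp (-(Complex.I * (ψ : ℂ))))) * -(Real.sin (Θ/2) : ℂ) +
      ((Real.cos (Θ/2) : ℂ) * (-Complex.I * (Real.sin (φ/2) : ℂ) * (Real.sin θ : ℂ) *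
          Complex.exp (-(Complex.I * (ψ : ℂ)))) +
        (Real.sin (Θ/2) : ℂ) * conj' ((Real.cos (φ/2) : ℂ) -
          Complex.I * (Real.sin (φ/2) : ℂ) * (Real.cos θ : ℂ))) * conj' (Real.cos (Θ/2) : ℂ)
      = Complex.I * (Real.sin (φ/2) : ℂ) * (((-x : ℝ) : ℂ) + ((y : ℝ) : ℂ) * Complex.I) := by
    simp only [map_sub, map_add, map_mul, map_neg, Complex.conj_ofReal, Complex.conj_I,
      Complex.conj_conj, ← Complex.exp_conj]
    rw [hexp1, show (-(-Complex.I * (ψ:ℂ))) = Complex.I * (ψ:ℂ) from by ring,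
      hexp2, hx, hy]
    simp only [Complex.ofReal_neg, Complex.ofReal_sub, Complex.ofReal_mul]
    rw [cosC Θ, sinC Θ]
    linear_combination ((Real.sin (φ/2):ℂ) * (Real.sin θ : ℂ) * (Real.sin ψ : ℂ) * Complex.I^2) * hpyC Θ
  rw [hnice]
  rw [norm_mul, norm_mul, Complex.norm_I, one_mul, Complex.norm_real, Real.norm_eq_abs]
  congr 1
  rw [Complex.norm_def, Complex.normSq_add_mul_I]
  congr 1
  ring

end SU2aux

open SU2aux in
theorem stmt12 (Θ : ℝ) (hΘ : Θ ∈ Set.Ioc 0 (π/2)) (l : ℕ) (hl : 1 ≤ l)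
    (θ ψ φ : ℝ) (hθ : θ ∈ Set.Ico 0 π) (hψ : ψ ∈ Set.Ico 0 π) (hφ : φ ∈ Set.Ico 0 (4*π)) :
    (∃ β γ : ℕ → ℝ,
      (∀ i < l, β i ∈ Set.Ico 0 (4*π)) ∧
      (∀ i, 1 ≤ i → i ≤ l - 1 → γ i ∈ Set.Ico 0 (4*π)) ∧
      Rot θ ψ φ =
        Rot Θ 0 (β 0) *
          ((List.range (l - 1)).map (fun i => Rot 0 0 (γ (i+1)) * Rot Θ 0 (β (i+1)))).prod) ↔
    |delta2 θ ψ φ Θ| ≤ (l - 1 : ℕ) * Θ := by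
  obtain ⟨hΘ1, hΘ2⟩ := hΘ
  obtain ⟨aW, bW, hW, hWu, habsbW⟩ := conjW Θ θ ψ φ
  have harc : |delta2 θ ψ φ Θ| = arcsin (‖bW‖) := by
    rw [delta2, arcsin_abs, abs_mul, abs_of_nonneg (Real.sqrt_nonneg _), habsbW]
  have hconj_mul : ∀ X Y : Matrix (Fin 2) (Fin 2) ℂ,
      V' Θ * (X * Y) * V Θ = (V' Θ * X * V Θ) * (V' Θ * Y * V Θ) := by
    intro X Y
    calc V' Θ * (X * Y) * V Θ = V' Θ * X * (V Θ * V' Θ) * Y * V Θ := by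
          rw [VV' Θ]; noncomm_ring
      _ = (V' Θ * X * V Θ) * (V' Θ * Y * V Θ) := by noncomm_ring
  have hcancelaux : ∀ X : Matrix (Fin 2) (Fin 2) ℂ, V Θ * (V' Θ * X * V Θ) * V' Θ = X := by
    intro X
    calc V Θ * (V' Θ * X * V Θ) * V' Θ = (V Θ * V' Θ) * X * (V Θ * V' Θ) := by noncomm_ring
      _ = X := by rw [VV' Θ, one_mul, mul_one]
  have hcancel : ∀ X Y : Matrix (Fin 2) (Fin 2) ℂ,
      V' Θ * X * V Θ = V' Θ * Y * V Θ → X = Y := by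
    intro X Y h
    rw [← hcancelaux X, ← hcancelaux Y, h]
  have hconj_prod : ∀ (L : List ℕ) (f g : ℕ → Matrix (Fin 2) (Fin 2) ℂ),
      (∀ i, V' Θ * f i * V Θ = g i) →
      V' Θ * (L.map f).prod * V Θ = (L.map g).prod := by
    intro L f g h
    induction L with
    | nil =>
        simp only [List.map_nil, List.prod_nil, mul_one]
        exact V'V Θ
    | cons head tail ih =>
        simp only [List.map_cons, List.prod_cons]
        rw [hconj_mul, h, ih]
  have hFprod : ∀ β γ : ℕ → ℝ,
      V' Θ * (Rot Θ 0 (β 0) *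
        ((List.range (l-1)).map (fun i => Rot 0 0 (γ (i+1)) * Rot Θ 0 (β (i+1)))).prod) * V Θ
      = Dz (β 0) * ((List.range (l-1)).map (fun i => Am Θ (γ (i+1)) * Dz (β (i+1)))).prod := by
    intro β γ
    rw [hconj_mul, conj_Rm]
    congr 1
    apply hconj_prod
    intro i
    rw [hconj_mul, conj_Rz, conj_Rm]
  constructor
  · rintro ⟨β, γ, hβ, hγ, hU⟩
    obtain ⟨a', b', hu', hle', heq'⟩ := prod_decomp Θ hΘ1 hΘ2 (l-1) β γ
    have h2 : M2 aW bW = M2 a' b' := by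
      rw [← hW, hU, hFprod β γ, heq']
    rw [harc, (M2_inj h2).2]
    exact hle'
  · intro hle
    rw [harc] at hle
    obtain ⟨β, γ, hβ, hγ, hM⟩ := suffic Θ hΘ1 hΘ2 (l-1) aW bW hWu hle
    refine ⟨β, γ, ?_, hγ, ?_⟩
    · intro i hi
      exact hβ i (by omega)
    · apply hcancel
      rw [hW, hFprod β γ]
      exact hM
end

section
/- Fix Θ ∈ (0,π/2] and let l ≥ 2 be an integer. The following are equivalent: (a) every R(θ,ψ,φ) with θ ∈ [0,π), ψ ∈ [0,π), φ ∈ [0,4π) can be written as an alternating product of 2l−1 rotations about the two fixed axes ẑ and m̂ = (sin Θ, 0, cos Θ) with all rotation angles in [0,4π) (i.e., either in the order z,m,z,…,z or in the order m,z,m,…,m); (b) Θ ≥ π/(2(l−1)). -/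
open Real

open Complex

noncomputable def M2 (a b : ℂ) : Matrix (Fin 2) (Fin 2) ℂ :=
  !![a, b; -(starRingEnd ℂ) b, (starRingEnd ℂ) a]

lemma Rot_eq_M2 (θ ψ φ : ℝ) :
    Rot θ ψ φ = M2 ((Real.cos (φ/2) : ℂ) - Complex.I * (Real.sin (φ/2) : ℂ) * (Real.cos θ : ℂ))
      (-Complex.I * (Real.sin (φ/2) : ℂ) * (Real.sin θ : ℂ) * Complex.exp (-(Complex.I * (ψ : ℂ)))) := by
  unfold Rot M2
  ext i j
  fin_cases i <;> fin_cases j <;>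
    simp only [Matrix.cons_val', Matrix.cons_val_zero, Matrix.cons_val_one, Matrix.head_cons,
      Matrix.empty_val', Matrix.cons_val_fin_one, Matrix.head_fin_const, map_sub, map_add,
      map_mul, map_neg, Complex.conj_I, Complex.conj_ofReal, ← Complex.exp_conj] <;>
    ring

lemma Rot_normSq (θ ψ φ : ℝ) :
    normSq ((Real.cos (φ/2) : ℂ) - Complex.I * (Real.sin (φ/2) : ℂ) * (Real.cos θ : ℂ))
    + normSq (-Complex.I * (Real.sin (φ/2) : ℂ) * (Real.sin θ : ℂ) * Complex.exp (-(Complex.I * (ψ : ℂ)))) = 1 := by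
  have h1 : normSq (Complex.exp (-(Complex.I * (ψ : ℂ)))) = 1 := by
    rw [Complex.normSq_eq_norm_sq]
    rw [show -(Complex.I * (ψ:ℂ)) = (-ψ : ℝ) * Complex.I by push_cast; ring]
    simp [Complex.norm_exp]
  simp only [Complex.normSq_mul, h1, mul_one]
  have e1 : normSq ((Real.cos (φ/2) : ℂ) - Complex.I * (Real.sin (φ/2) : ℂ) * (Real.cos θ : ℂ))
      = Real.cos (φ/2)^2 + (Real.sin (φ/2) * Real.cos θ)^2 := by
    simp only [Complex.normSq_apply, Complex.sub_re, Complex.sub_im, Complex.mul_re, Complex.mul_im,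
      Complex.I_re, Complex.I_im, Complex.ofReal_re, Complex.ofReal_im]
    ring
  have e2 : normSq (-Complex.I * (Real.sin (φ/2) : ℂ) * (Real.sin θ : ℂ))
      = (Real.sin (φ/2) * Real.sin θ)^2 := by
    simp only [Complex.normSq_apply, Complex.neg_re, Complex.neg_im, Complex.mul_re, Complex.mul_im,
      Complex.I_re, Complex.I_im, Complex.ofReal_re, Complex.ofReal_im]
    ring
  rw [e1]; simp only [Complex.normSq_neg, Complex.normSq_I, Complex.normSq_ofReal, one_mul]
  nlinarith [Real.sin_sq_add_cos_sq (φ/2), Real.sin_sq_add_cos_sq θ]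

lemma M2_mul (a b c d : ℂ) :
    M2 a b * M2 c d = M2 (a*c - b*(starRingEnd ℂ) d) (a*d + b*(starRingEnd ℂ) c) := by
  unfold M2
  rw [Matrix.mul_fin_two]
  ext i j
  fin_cases i <;> fin_cases j <;> simp [map_sub, map_add, map_mul, Complex.conj_conj] <;> ring

lemma M2_normSq (a b c d : ℂ) (h1 : normSq a + normSq b = 1) (h2 : normSq c + normSq d = 1) :
    normSq (a*c - b*(starRingEnd ℂ) d) + normSq (a*d + b*(starRingEnd ℂ) c) = 1 := by
  have e : ∀ z : ℂ, (normSq z : ℂ) = z * (starRingEnd ℂ) z := fun z => (Complex.mul_conj z).symm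
  have : ((normSq (a*c - b*(starRingEnd ℂ) d) + normSq (a*d + b*(starRingEnd ℂ) c) : ℝ) : ℂ)
      = ((normSq a + normSq b : ℝ) : ℂ) * ((normSq c + normSq d : ℝ) : ℂ) := by
    push_cast [e]
    simp only [map_sub, map_add, map_mul, Complex.conj_conj]
    ring
  rw [h1, h2] at this
  norm_num at this; exact_mod_cast this


lemma key_ineq (a b c d : ℂ) (hab : normSq a + normSq b = 1) (hcd : normSq c + normSq d = 1)
    (x y : ℝ) (hx : 0 ≤ x) (hy : 0 ≤ y) (hxy : x + y ≤ π/2)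
    (hbx : ‖b‖ ≤ Real.sin x) (hdy : ‖d‖ ≤ Real.sin y) :
    ‖a*d + b*(starRingEnd ℂ) c‖ ≤ Real.sin (x+y) := by
  set u := ‖b‖ with hu
  set v := ‖d‖ with hv
  have hu0 : 0 ≤ u := norm_nonneg b
  have hv0 : 0 ≤ v := norm_nonneg d
  have hu1 : u ≤ 1 := by
    nlinarith [Complex.sq_norm b, Complex.sq_norm a, Complex.normSq_nonneg a, norm_nonneg b]
  have hv1 : v ≤ 1 := by
    nlinarith [Complex.sq_norm d, Complex.sq_norm c, Complex.normSq_nonneg c, norm_nonneg d]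
  have ha : ‖a‖ = Real.sqrt (1 - u^2) := by
    rw [← Complex.sq_norm b, ← Complex.sq_norm a] at hab
    rw [show (1:ℝ) - ‖b‖ ^2 = ‖a‖ ^2 by linarith]
    exact (Real.sqrt_sq (norm_nonneg a)).symm
  have hc : ‖c‖ = Real.sqrt (1 - v^2) := by
    rw [← Complex.sq_norm d, ← Complex.sq_norm c] at hcd
    rw [show (1:ℝ) - ‖d‖ ^2 = ‖c‖ ^2 by linarith]
    exact (Real.sqrt_sq (norm_nonneg c)).symm
  have step1 : ‖a*d + b*(starRingEnd ℂ) c‖ ≤ Real.sqrt (1-u^2) * v + u * Real.sqrt (1-v^2) := by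
    calc ‖a*d + b*(starRingEnd ℂ) c‖ ≤ ‖a*d‖ + ‖b*(starRingEnd ℂ) c‖ :=
          norm_add_le _ _
      _ = ‖a‖ * v + u * ‖c‖ := by rw [norm_mul, norm_mul, Complex.norm_conj]
      _ = Real.sqrt (1-u^2) * v + u * Real.sqrt (1-v^2) := by rw [ha, hc]
  have step2 : Real.sqrt (1-u^2) * v + u * Real.sqrt (1-v^2) = Real.sin (arcsin u + arcsin v) := by
    rw [Real.sin_add, Real.sin_arcsin (by linarith) hu1, Real.sin_arcsin (by linarith) hv1,
      Real.cos_arcsin, Real.cos_arcsin]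
    ring_nf
  have hux : arcsin u ≤ x := by
    rw [← Real.arcsin_sin (by linarith) (by linarith : x ≤ π/2)]
    exact Real.monotone_arcsin hbx
  have hvy : arcsin v ≤ y := by
    rw [← Real.arcsin_sin (by linarith) (by linarith : y ≤ π/2)]
    exact Real.monotone_arcsin hdy
  have step3 : Real.sin (arcsin u + arcsin v) ≤ Real.sin (x+y) := by
    apply Real.strictMonoOn_sin.monotoneOn
    · have h1 := Real.arcsin_nonneg.2 hu0
      have h2 := Real.arcsin_nonneg.2 hv0
      exact ⟨by linarith [Real.pi_pos], by linarith⟩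
    · exact ⟨by linarith [Real.pi_pos], by linarith⟩
    · linarith
  linarith


lemma exists_mod4pi (x : ℝ) : ∃ β : ℝ, β ∈ Set.Ico 0 (4*π) ∧ ∃ k : ℤ, β = x + 4*π*k := by
  have h4 : (0:ℝ) < 4*π := by positivity
  refine ⟨4*π * Int.fract (x/(4*π)),
    ⟨mul_nonneg h4.le (Int.fract_nonneg _), ?_⟩, -⌊x/(4*π)⌋, ?_⟩
  · have := Int.fract_lt_one (x/(4*π))
    nlinarith [Int.fract_nonneg (x/(4*π))]
  · rw [Int.fract]
    push_cast
    field_simp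
    ring

lemma exists_exp_angle (z : ℂ) (hz : ‖z‖ = 1) :
    ∃ β ∈ Set.Ico 0 (4*π), Complex.exp (-(↑β/2) * Complex.I) = z := by
  obtain ⟨β, hβ, k, hk⟩ := exists_mod4pi (-2 * Complex.arg z)
  refine ⟨β, hβ, ?_⟩
  have : (-(↑β/2) * Complex.I : ℂ) = Complex.arg z * Complex.I + (-k) * (2*π*Complex.I) := by
    rw [hk]; push_cast; ring
  have e2 := Complex.exp_int_mul_two_pi_mul_I (-k)
  push_cast at e2
  rw [this, Complex.exp_add, e2, mul_one]
  have := Complex.norm_mul_exp_arg_mul_I z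
  rw [hz] at this
  simpa using this

lemma M2_congr {a b c d : ℂ} (h1 : a = c) (h2 : b = d) : M2 a b = M2 c d := by rw [h1, h2]

lemma Rot00_eq (β : ℝ) : Rot 0 0 β = M2 (Complex.exp (-(↑β/2) * Complex.I)) 0 := by
  rw [Rot_eq_M2]
  refine M2_congr ?_ ?_
  · rw [show (-(↑β/2) * Complex.I : ℂ) = (((-(β/2)) : ℝ) : ℂ) * Complex.I by push_cast; ring,
      Complex.exp_mul_I, ← Complex.ofReal_cos, ← Complex.ofReal_sin]
    push_cast [Real.cos_neg, Real.sin_neg, Real.cos_zero]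
    ring
  · push_cast [Real.sin_zero]
    ring

lemma RotT_eq (Θ γ : ℝ) : Rot Θ 0 γ =
    M2 ((Real.cos (γ/2) : ℂ) - Complex.I * (Real.sin (γ/2) : ℂ) * (Real.cos Θ : ℂ))
       (-Complex.I * ((Real.sin (γ/2) * Real.sin Θ : ℝ) : ℂ)) := by
  rw [Rot_eq_M2]
  refine M2_congr rfl ?_
  push_cast
  simp
  ring

lemma M2_one : M2 1 0 = 1 := by
  unfold M2
  ext i j
  fin_cases i <;> fin_cases j <;> simp [Matrix.one_fin_two]

lemma Rot00_eq' (φ : ℝ) : Rot 0 0 φ = M2 ((Real.cos (φ/2) : ℂ) - Complex.I * (Real.sin (φ/2) : ℂ)) 0 := by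
  rw [Rot_eq_M2]
  refine M2_congr (by push_cast [Real.cos_zero]; ring) (by push_cast [Real.sin_zero]; ring)

lemma core_bound (Θ : ℝ) (hΘ0 : 0 ≤ Θ) (g : ℕ → Matrix (Fin 2) (Fin 2) ℂ)
    (hg : ∀ i, ∃ a b : ℂ, normSq a + normSq b = 1 ∧ g i = M2 a b ∧ ‖b‖ ≤ Real.sin Θ) :
    ∀ n : ℕ, (n*Θ ≤ π/2) →
      ∃ a b : ℂ, normSq a + normSq b = 1 ∧ ((List.range n).map g).prod = M2 a b ∧
        ‖b‖ ≤ Real.sin (n*Θ) := by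
  intro n
  induction n with
  | zero =>
    intro _
    exact ⟨1, 0, by simp, by simp [M2_one.symm], by simp⟩
  | succ n ih =>
    intro hn1
    have hn : (n:ℝ)*Θ ≤ π/2 := by
      have : (n:ℝ) ≤ (n+1:ℕ) := by push_cast; linarith
      nlinarith [mul_le_mul_of_nonneg_right this hΘ0]
    obtain ⟨a, b, hab, hprod, hb⟩ := ih hn
    obtain ⟨c, d, hcd, hgn, hd⟩ := hg n
    refine ⟨a*c - b*(starRingEnd ℂ) d, a*d + b*(starRingEnd ℂ) c,
      M2_normSq a b c d hab hcd, ?_, ?_⟩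
    · rw [List.range_succ, List.map_append, List.prod_append, hprod]
      simp [hgn, M2_mul]
    · have := key_ineq a b c d hab hcd (n*Θ) Θ (by positivity) hΘ0
        (by push_cast at hn1 ⊢; linarith) hb hd
      have e : (n:ℝ)*Θ + Θ = ((n+1 : ℕ):ℝ)*Θ := by push_cast; ring
      rwa [e] at this

noncomputable def Smat (Θ : ℝ) : Matrix (Fin 2) (Fin 2) ℂ :=
  M2 (-Complex.I * (Real.cos (Θ/2) : ℂ)) (-Complex.I * (Real.sin (Θ/2) : ℂ))

lemma prod_swap (S : Matrix (Fin 2) (Fin 2) ℂ) (g g' : ℕ → Matrix (Fin 2) (Fin 2) ℂ)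
    (h : ∀ i, g i * S = S * g' i) :
    ∀ n, ((List.range n).map g).prod * S = S * ((List.range n).map g').prod := by
  intro n
  induction n with
  | zero => simp
  | succ n ih =>
    rw [List.range_succ, List.map_append, List.prod_append, List.map_append, List.prod_append]
    simp only [List.map_cons, List.map_nil, List.prod_cons, List.prod_nil, mul_one]
    rw [mul_assoc, h n, ← mul_assoc, ih, mul_assoc]

lemma Smat_swap1 (Θ φ : ℝ) : Rot Θ 0 φ * Smat Θ = Smat Θ * Rot 0 0 φ := by
  rw [RotT_eq, Rot00_eq']
  unfold Smat
  rw [M2_mul, M2_mul]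
  have hC := Real.cos_two_mul (Θ/2)
  have hS := Real.sin_two_mul (Θ/2)
  have h2 : 2*(Θ/2) = Θ := by ring
  rw [h2] at hC hS
  have hpy : Real.sin (Θ/2)^2 + Real.cos (Θ/2)^2 = 1 := Real.sin_sq_add_cos_sq (Θ/2)
  have hpyC : ((Real.sin (Θ/2) : ℂ))^2 + ((Real.cos (Θ/2) : ℂ))^2 = 1 := by
    exact_mod_cast congrArg (fun x : ℝ => (x:ℂ)) hpy
  refine M2_congr ?_ ?_ <;>
  · simp only [map_mul, map_sub, map_add, map_neg, Complex.conj_I, Complex.conj_ofReal, map_zero]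
    rw [hC, hS]
    push_cast [-Complex.ofReal_cos, -Complex.ofReal_sin]
    first
    | linear_combination (2*Complex.I*Complex.I*(Real.sin (φ/2):ℂ)*(Real.cos (Θ/2):ℂ)) * hpyC
    | linear_combination (-2*Complex.I*Complex.I*(Real.sin (φ/2):ℂ)*(Real.cos (Θ/2):ℂ)) * hpyC
    | linear_combination (0:ℂ) * hpyC

lemma Smat_swap2 (Θ φ : ℝ) : Rot 0 0 φ * Smat Θ = Smat Θ * Rot Θ 0 φ := by
  rw [Rot00_eq', RotT_eq]
  unfold Smat
  rw [M2_mul, M2_mul]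
  have hC := Real.cos_two_mul (Θ/2)
  have hS := Real.sin_two_mul (Θ/2)
  have h2 : 2*(Θ/2) = Θ := by ring
  rw [h2] at hC hS
  have hpy : Real.sin (Θ/2)^2 + Real.cos (Θ/2)^2 = 1 := Real.sin_sq_add_cos_sq (Θ/2)
  have hpyC : ((Real.sin (Θ/2) : ℂ))^2 + ((Real.cos (Θ/2) : ℂ))^2 = 1 := by
    exact_mod_cast congrArg (fun x : ℝ => (x:ℂ)) hpy
  refine M2_congr ?_ ?_ <;>
  · simp only [map_mul, map_sub, map_add, map_neg, Complex.conj_I, Complex.conj_ofReal, map_zero]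
    rw [hC, hS]
    push_cast [-Complex.ofReal_cos, -Complex.ofReal_sin]
    first
    | linear_combination (2*Complex.I*Complex.I*(Real.sin (φ/2):ℂ)*(Real.cos (Θ/2):ℂ)) * hpyC
    | linear_combination (-2*Complex.I*Complex.I*(Real.sin (φ/2):ℂ)*(Real.cos (Θ/2):ℂ)) * hpyC
    | linear_combination (0:ℂ) * hpyC

lemma M2_inj {a b c d : ℂ} (h : M2 a b = M2 c d) : b = d := by
  have := congrFun (congrFun h 0) 1
  simpa [M2] using this

lemma RotT_normSq (Θ γ : ℝ) :
    normSq ((Real.cos (γ/2) : ℂ) - Complex.I * (Real.sin (γ/2) : ℂ) * (Real.cos Θ : ℂ))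
    + normSq (-Complex.I * ((Real.sin (γ/2) * Real.sin Θ : ℝ) : ℂ)) = 1 := by
  have e1 : normSq ((Real.cos (γ/2) : ℂ) - Complex.I * (Real.sin (γ/2) : ℂ) * (Real.cos Θ : ℂ))
      = Real.cos (γ/2)^2 + (Real.sin (γ/2) * Real.cos Θ)^2 := by
    simp only [Complex.normSq_apply, Complex.sub_re, Complex.sub_im, Complex.mul_re, Complex.mul_im,
      Complex.I_re, Complex.I_im, Complex.ofReal_re, Complex.ofReal_im]
    ring
  have e2 : normSq (-Complex.I * ((Real.sin (γ/2) * Real.sin Θ : ℝ) : ℂ))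
      = (Real.sin (γ/2) * Real.sin Θ)^2 := by
    simp only [Complex.normSq_mul, Complex.normSq_neg, Complex.normSq_I, Complex.normSq_ofReal, one_mul]
    ring
  rw [e1, e2]
  nlinarith [Real.sin_sq_add_cos_sq (γ/2), Real.sin_sq_add_cos_sq Θ]

lemma Rot00_normSq (β : ℝ) : normSq (Complex.exp (-(↑β/2) * Complex.I)) + normSq (0:ℂ) = 1 := by
  have : (-(↑β/2) * Complex.I : ℂ) = ((-(β/2) : ℝ) : ℂ) * Complex.I := by push_cast; ring
  rw [this, Complex.normSq_eq_norm_sq, Complex.norm_exp_ofReal_mul_I]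
  simp

lemma q0_eq : Rot (π/2) (π/2) π = M2 0 (-1) := by
  rw [Rot_eq_M2]
  refine M2_congr ?_ ?_
  · norm_num [Real.cos_pi_div_two]
  · have he : Complex.exp (-(Complex.I * ((π/2 : ℝ) : ℂ))) = -Complex.I := by
      rw [show (-(Complex.I * ((π/2 : ℝ) : ℂ))) = ((-(π/2) : ℝ) : ℂ) * Complex.I by push_cast; ring,
        Complex.exp_mul_I, ← Complex.ofReal_cos, ← Complex.ofReal_sin]
      rw [Real.cos_neg, Real.sin_neg, Real.cos_pi_div_two, Real.sin_pi_div_two]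
      push_cast
      ring
    rw [he]
    norm_num [Real.sin_pi_div_two]

lemma sinT_pos {Θ : ℝ} (hΘ : Θ ∈ Set.Ioc 0 (π/2)) : 0 < Real.sin Θ :=
  Real.sin_pos_of_pos_of_lt_pi hΘ.1 (lt_of_le_of_lt hΘ.2 (by linarith [Real.pi_pos]))

lemma no_word (Θ : ℝ) (hΘ : Θ ∈ Set.Ioc 0 (π/2)) (n : ℕ) (hn : (n:ℝ)*Θ < π/2)
    (t : ℂ) (ht : ‖t‖ = 1) (β γ : ℕ → ℝ) :
    M2 0 t ≠ Rot 0 0 (β 0) *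
      ((List.range n).map (fun i => Rot Θ 0 (γ (i+1)) * Rot 0 0 (β (i+1)))).prod := by
  intro heq
  have hg : ∀ i : ℕ, ∃ a b : ℂ, normSq a + normSq b = 1 ∧
      (fun i => Rot Θ 0 (γ (i+1)) * Rot 0 0 (β (i+1))) i = M2 a b ∧
      ‖b‖ ≤ Real.sin Θ := by
    intro i
    refine ⟨((Real.cos (γ (i+1)/2) : ℂ) - Complex.I * (Real.sin (γ (i+1)/2) : ℂ) * (Real.cos Θ : ℂ))
        * Complex.exp (-(↑(β (i+1))/2) * Complex.I)
        - (-Complex.I * ((Real.sin (γ (i+1)/2) * Real.sin Θ : ℝ) : ℂ)) * (starRingEnd ℂ) 0,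
      ((Real.cos (γ (i+1)/2) : ℂ) - Complex.I * (Real.sin (γ (i+1)/2) : ℂ) * (Real.cos Θ : ℂ)) * 0
        + (-Complex.I * ((Real.sin (γ (i+1)/2) * Real.sin Θ : ℝ) : ℂ)) *
          (starRingEnd ℂ) (Complex.exp (-(↑(β (i+1))/2) * Complex.I)), ?_, ?_, ?_⟩
    · exact M2_normSq _ _ _ _ (RotT_normSq Θ (γ (i+1))) (Rot00_normSq (β (i+1)))
    · show Rot Θ 0 (γ (i+1)) * Rot 0 0 (β (i+1)) = _
      rw [RotT_eq, Rot00_eq, M2_mul]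
    · rw [show ((Real.cos (γ (i+1)/2) : ℂ) - Complex.I * (Real.sin (γ (i+1)/2) : ℂ) * (Real.cos Θ : ℂ)) * 0
            + (-Complex.I * ((Real.sin (γ (i+1)/2) * Real.sin Θ : ℝ) : ℂ)) *
              (starRingEnd ℂ) (Complex.exp (-(↑(β (i+1))/2) * Complex.I))
          = (-Complex.I * ((Real.sin (γ (i+1)/2) * Real.sin Θ : ℝ) : ℂ)) *
              (starRingEnd ℂ) (Complex.exp (-(↑(β (i+1))/2) * Complex.I)) by ring]
      rw [norm_mul, norm_mul]
      have habs : ‖(starRingEnd ℂ) (Complex.exp (-(↑(β (i+1))/2) * Complex.I))‖ = 1 := by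
        rw [Complex.norm_conj]
        rw [show (-(↑(β (i+1))/2) * Complex.I : ℂ) = ((-(β (i+1))/2 : ℝ) : ℂ) * Complex.I by push_cast; ring]
        exact Complex.norm_exp_ofReal_mul_I _
      rw [habs, mul_one]
      have hnI : ‖-Complex.I‖ = 1 := by simp
      rw [hnI, one_mul, Complex.norm_real, Real.norm_eq_abs, abs_mul]
      calc |Real.sin (γ (i+1)/2)| * |Real.sin Θ| ≤ 1 * |Real.sin Θ| := by
            apply mul_le_mul_of_nonneg_right (Real.abs_sin_le_one _) (abs_nonneg _)
        _ = Real.sin Θ := by rw [one_mul, abs_of_pos (sinT_pos hΘ)]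
  obtain ⟨a, b, hab, hprod, hb⟩ := core_bound Θ hΘ.1.le _ hg n hn.le
  rw [hprod, Rot00_eq, M2_mul] at heq
  have hbt := M2_inj heq
  simp only [zero_mul, mul_zero] at hbt
  rw [add_zero] at hbt
  have habs1 : ‖t‖ = ‖b‖ := by
    rw [hbt, norm_mul,
      show (-(↑(β 0)/2) * Complex.I : ℂ) = ((-(β 0)/2 : ℝ) : ℂ) * Complex.I by push_cast; ring,
      Complex.norm_exp_ofReal_mul_I, one_mul]
  have hnn : 0 ≤ (n:ℝ)*Θ := mul_nonneg (Nat.cast_nonneg n) hΘ.1.le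
  have hlt1 : Real.sin ((n:ℝ)*Θ) < 1 := by
    rw [← Real.sin_pi_div_two]
    apply Real.strictMonoOn_sin ?_ ?_ hn
    · exact ⟨by linarith [Real.pi_pos], by linarith⟩
    · exact ⟨by linarith [Real.pi_pos], by linarith⟩
  rw [ht] at habs1
  linarith [habs1 ▸ hb]

lemma Smat_q0 (Θ : ℝ) : M2 0 (-1) * Smat Θ = Smat Θ * M2 0 1 := by
  unfold Smat
  rw [M2_mul, M2_mul]
  refine M2_congr ?_ ?_ <;>
  · simp only [map_mul, map_neg, map_one, map_zero, Complex.conj_I, Complex.conj_ofReal]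
    ring

lemma Smat_cancel (Θ : ℝ) {A B : Matrix (Fin 2) (Fin 2) ℂ} (h : Smat Θ * A = Smat Θ * B) :
    A = B := by
  have hpy : Real.sin (Θ/2)^2 + Real.cos (Θ/2)^2 = 1 := Real.sin_sq_add_cos_sq (Θ/2)
  have hpyC : ((Real.sin (Θ/2) : ℂ))^2 + ((Real.cos (Θ/2) : ℂ))^2 = 1 := by
    exact_mod_cast congrArg (fun x : ℝ => (x:ℂ)) hpy
  have hI : Complex.I^2 = -1 := Complex.I_sq
  have hTS : M2 (Complex.I * (Real.cos (Θ/2) : ℂ)) (Complex.I * (Real.sin (Θ/2) : ℂ)) * Smat Θ = 1 := by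
    unfold Smat
    rw [M2_mul, ← M2_one]
    refine M2_congr ?_ ?_ <;>
    · simp only [map_mul, map_neg, Complex.conj_I, Complex.conj_ofReal]
      first
      | linear_combination (0:ℂ) * hpyC
      | linear_combination (-(Complex.I^2)) * hpyC + (-1 : ℂ) * hI
      | linear_combination (-(Complex.I^2)) * hpyC + (1 : ℂ) * hI
      | linear_combination (Complex.I^2) * hpyC + (-1 : ℂ) * hI
      | linear_combination (Complex.I^2) * hpyC + (1 : ℂ) * hI
  calc A = 1 * A := (one_mul A).symm
    _ = M2 (Complex.I * (Real.cos (Θ/2) : ℂ)) (Complex.I * (Real.sin (Θ/2) : ℂ)) * Smat Θ * A := by rw [hTS]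
    _ = M2 (Complex.I * (Real.cos (Θ/2) : ℂ)) (Complex.I * (Real.sin (Θ/2) : ℂ)) * Smat Θ * B := by
        rw [mul_assoc, h, ← mul_assoc]
    _ = 1 * B := by rw [hTS]
    _ = B := one_mul B

lemma M2_inv_right (p r : ℂ) (h : normSq p + normSq r = 1) :
    M2 ((starRingEnd ℂ) p) (-r) * M2 p r = M2 1 0 := by
  rw [M2_mul]
  refine M2_congr ?_ ?_
  · have h1 := Complex.mul_conj p
    have h2 := Complex.mul_conj r
    have hc : ((normSq p : ℝ) : ℂ) + ((normSq r : ℝ) : ℂ) = 1 := by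
      rw [← Complex.ofReal_add, h]; norm_num
    linear_combination h1 + h2 + hc
  · ring

lemma abs_eq_of_normSq_cos {z : ℂ} {t : ℝ} (ht0 : 0 ≤ t) (ht : t ≤ π/2)
    (h : normSq z = 1 - Real.sin t ^ 2) : ‖z‖ = Real.cos t := by
  have hct : 0 ≤ Real.cos t := Real.cos_nonneg_of_mem_Icc ⟨by linarith [Real.pi_pos], ht⟩
  rw [Complex.norm_def, h, show 1 - Real.sin t ^2 = Real.cos t ^2 by
    nlinarith [Real.sin_sq_add_cos_sq t]]
  exact Real.sqrt_sq hct

lemma decompose (Θ : ℝ) (hΘ : Θ ∈ Set.Ioc 0 (π/2)) :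
    ∀ n : ℕ, ∀ a b : ℂ, normSq a + normSq b = 1 →
      Real.arcsin (‖b‖) ≤ (n:ℝ) * Θ →
      ∃ β γ : ℕ → ℝ, (∀ i ≤ n, β i ∈ Set.Ico 0 (4*π)) ∧
        (∀ i, 1 ≤ i → i ≤ n → γ i ∈ Set.Ico 0 (4*π)) ∧
        M2 a b = Rot 0 0 (β 0) *
          ((List.range n).map (fun i => Rot Θ 0 (γ (i+1)) * Rot 0 0 (β (i+1)))).prod := by
  intro n
  induction n with
  | zero =>
    intro a b hab harc
    have hb0 : b = 0 := by
      by_contra hb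
      have h1 : 0 < ‖b‖ := norm_pos_iff.mpr hb
      have := Real.arcsin_pos.2 h1
      push_cast at harc
      linarith
    subst hb0
    have ha1 : ‖a‖ = 1 := by
      have : normSq a = 1 := by simpa using hab
      rw [Complex.norm_def, this, Real.sqrt_one]
    obtain ⟨β0, hβ0, hw⟩ := exists_exp_angle a ha1
    refine ⟨fun _ => β0, fun _ => 0, fun i _ => hβ0, fun i h1 h2 => by omega, ?_⟩
    simp only [List.range_zero, List.map_nil, List.prod_nil, mul_one]
    rw [Rot00_eq, hw]
  | succ n ih =>
    intro a b hab harc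
    have hb1 : ‖b‖ ≤ 1 := by
      have h1 : normSq b ≤ 1 := by nlinarith [Complex.normSq_nonneg a]
      rw [Complex.norm_def]
      calc Real.sqrt (normSq b) ≤ Real.sqrt 1 := Real.sqrt_le_sqrt h1
        _ = 1 := Real.sqrt_one
    set d := Real.arcsin (‖b‖) with hd
    have hd0 : 0 ≤ d := Real.arcsin_nonneg.2 (norm_nonneg b)
    have hdpi : d ≤ π/2 := Real.arcsin_le_pi_div_two _
    have hsind : Real.sin d = ‖b‖ :=
      Real.sin_arcsin (by linarith [norm_nonneg b]) hb1
    set x := min Θ d with hxdef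
    have hx0 : 0 ≤ x := le_min hΘ.1.le hd0
    have hxΘ : x ≤ Θ := min_le_left _ _
    have hxd : x ≤ d := min_le_right _ _
    have hxpi : x ≤ π/2 := le_trans hxΘ hΘ.2
    have hsinΘpos := sinT_pos hΘ
    have hsinx_le : Real.sin x ≤ Real.sin Θ := by
      apply Real.strictMonoOn_sin.monotoneOn ⟨by linarith [Real.pi_pos], hxpi⟩
        ⟨by linarith [Real.pi_pos], hΘ.2⟩ hxΘ
    have hsinx0 : 0 ≤ Real.sin x := Real.sin_nonneg_of_nonneg_of_le_pi hx0
      (by linarith [Real.pi_pos])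
    have hr0 : 0 ≤ Real.sin x / Real.sin Θ := by positivity
    have hr1 : Real.sin x / Real.sin Θ ≤ 1 := by rw [div_le_one hsinΘpos]; exact hsinx_le
    set γval := 2 * Real.arcsin (Real.sin x / Real.sin Θ) with hγdef
    have hγhalf : γval / 2 = Real.arcsin (Real.sin x / Real.sin Θ) := by rw [hγdef]; ring
    have hγmem : γval ∈ Set.Ico 0 (4*π) := by
      constructor
      · rw [hγdef]; have := Real.arcsin_nonneg.2 hr0; linarith
      · have := Real.arcsin_le_pi_div_two (Real.sin x / Real.sin Θ)
        rw [hγdef]; linarith [Real.pi_pos]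
    have hsinγ : Real.sin (γval/2) = Real.sin x / Real.sin Θ := by
      rw [hγhalf]; exact Real.sin_arcsin (by linarith) hr1
    have hsx : Real.sin (γval/2) * Real.sin Θ = Real.sin x := by
      rw [hsinγ]; field_simp
    obtain ⟨u, hu⟩ : ∃ t : ℂ, t = (Real.cos (γval/2) : ℂ)
        - Complex.I * (Real.sin (γval/2) : ℂ) * (Real.cos Θ : ℂ) := ⟨_, rfl⟩
    obtain ⟨Bm, hBm⟩ : ∃ t : ℂ,
        t = -Complex.I * ((Real.sin (γval/2) * Real.sin Θ : ℝ) : ℂ) := ⟨_, rfl⟩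
    have hUB : normSq u + normSq Bm = 1 := by rw [hu, hBm]; exact RotT_normSq Θ γval
    have hnormu : normSq u = 1 - Real.sin x ^ 2 := by
      have e1 : normSq u = Real.cos (γval/2)^2 + (Real.sin (γval/2) * Real.cos Θ)^2 := by
        rw [hu]
        simp only [Complex.normSq_apply, Complex.sub_re, Complex.sub_im, Complex.mul_re,
          Complex.mul_im, Complex.I_re, Complex.I_im, Complex.ofReal_re, Complex.ofReal_im]
        ring
      rw [e1, ← hsx]
      nlinarith [Real.sin_sq_add_cos_sq (γval/2), Real.sin_sq_add_cos_sq Θ]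
    have habsu : ‖u‖ = Real.cos x := abs_eq_of_normSq_cos hx0 hxpi hnormu
    have hnsa : normSq a = 1 - Real.sin d ^ 2 := by
      have : normSq b = Real.sin d ^ 2 := by rw [hsind, Complex.sq_norm]
      linarith
    have habsa : ‖a‖ = Real.cos d := abs_eq_of_normSq_cos hd0 hdpi hnsa
    -- phase choice
    obtain ⟨z1, hz1⟩ : ∃ t : ℂ, t = b * u := ⟨_, rfl⟩
    obtain ⟨z2, hz2⟩ : ∃ t : ℂ, t = Complex.I * a * ((Real.sin x : ℝ) : ℂ) := ⟨_, rfl⟩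
    obtain ⟨ω, hω⟩ : ∃ t : ℝ, t = (Complex.arg z2 - Complex.arg z1 + π)/2 := ⟨_, rfl⟩
    obtain ⟨βval, hβmem, hwval⟩ := exists_exp_angle (Complex.exp ((ω : ℝ) * Complex.I))
      (Complex.norm_exp_ofReal_mul_I ω)
    obtain ⟨w, hwdef⟩ : ∃ t : ℂ, t = Complex.exp ((ω : ℝ) * Complex.I) := ⟨_, rfl⟩
    rw [← hwdef] at hwval
    have habsw : ‖w‖ = 1 := by rw [hwdef]; exact Complex.norm_exp_ofReal_mul_I ω
    have hnormw : normSq w = 1 := by rw [Complex.normSq_eq_norm_sq, habsw]; norm_num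
    -- new element
    obtain ⟨a', ha'⟩ : ∃ t : ℂ, t = a * (starRingEnd ℂ) w * (starRingEnd ℂ) u
        - b * w * (starRingEnd ℂ) (-Bm) := ⟨_, rfl⟩
    obtain ⟨b', hb'⟩ : ∃ t : ℂ, t = a * (starRingEnd ℂ) w * (-Bm) + b * w * u := ⟨_, rfl⟩
    have hq' : M2 a b * M2 ((starRingEnd ℂ) w) 0 * M2 ((starRingEnd ℂ) u) (-Bm) = M2 a' b' := by
      rw [M2_mul, M2_mul]
      refine M2_congr ?_ ?_
      · rw [ha']; simp only [map_zero, Complex.conj_conj, mul_zero, zero_mul, sub_zero, add_zero]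
        ring
      · rw [hb']; simp only [map_zero, Complex.conj_conj, mul_zero, zero_mul, sub_zero, add_zero]
        ring
    have hab' : normSq a' + normSq b' = 1 := by
      have h1 : normSq ((starRingEnd ℂ) w) + normSq (0:ℂ) = 1 := by
        simpa [Complex.normSq_conj] using hnormw
      have h2 : normSq ((starRingEnd ℂ) u) + normSq (-Bm) = 1 := by
        simpa [Complex.normSq_conj, Complex.normSq_neg] using hUB
      have hthis := M2_normSq _ _ _ _ (M2_normSq a b _ _ hab h1) h2
      have e1 : (a * (starRingEnd ℂ) w - b * (starRingEnd ℂ) (0:ℂ)) * (starRingEnd ℂ) u -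
          (a * 0 + b * (starRingEnd ℂ) ((starRingEnd ℂ) w)) * (starRingEnd ℂ) (-Bm) = a' := by
        rw [ha']; simp only [map_zero, Complex.conj_conj, mul_zero, zero_mul, sub_zero, add_zero]
        ring
      have e2 : (a * (starRingEnd ℂ) w - b * (starRingEnd ℂ) (0:ℂ)) * (-Bm) +
          (a * 0 + b * (starRingEnd ℂ) ((starRingEnd ℂ) w)) * (starRingEnd ℂ) ((starRingEnd ℂ) u) = b' := by
        rw [hb']; simp only [map_zero, Complex.conj_conj, mul_zero, zero_mul, sub_zero, add_zero]
        ring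
      rw [e1, e2] at hthis
      exact hthis
    -- value of b'
    have hconjw : (starRingEnd ℂ) w = Complex.exp (((-ω : ℝ) : ℂ) * Complex.I) := by
      rw [hwdef, ← Complex.exp_conj]
      congr 1
      simp only [map_mul, Complex.conj_I, Complex.conj_ofReal]
      push_cast
      ring
    have hb'2 : b' = z1 * w + z2 * (starRingEnd ℂ) w := by
      rw [hb', hz1, hz2, hBm, hsx]
      ring
    have hz1e : z1 * w = ((‖z1‖ : ℝ) : ℂ)
        * Complex.exp (((Complex.arg z1 + ω : ℝ) : ℂ) * Complex.I) := by
      conv_lhs => rw [← Complex.norm_mul_exp_arg_mul_I z1]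
      rw [hwdef, mul_assoc, ← Complex.exp_add]
      congr 2
      push_cast
      ring
    have hz2e : z2 * (starRingEnd ℂ) w = ((‖z2‖ : ℝ) : ℂ)
        * Complex.exp (((Complex.arg z2 - ω : ℝ) : ℂ) * Complex.I) := by
      conv_lhs => rw [← Complex.norm_mul_exp_arg_mul_I z2]
      rw [hconjw, mul_assoc, ← Complex.exp_add]
      congr 2
      push_cast
      ring
    have hangle : Complex.arg z2 - ω = (Complex.arg z1 + ω) - π := by rw [hω]; ring
    have hexpflip : Complex.exp (((Complex.arg z2 - ω : ℝ) : ℂ) * Complex.I)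
        = - Complex.exp (((Complex.arg z1 + ω : ℝ) : ℂ) * Complex.I) := by
      rw [hangle]
      rw [show (((Complex.arg z1 + ω - π : ℝ) : ℂ) * Complex.I)
          = ((Complex.arg z1 + ω : ℝ) : ℂ) * Complex.I - (π : ℂ) * Complex.I by push_cast; ring]
      rw [Complex.exp_sub, Complex.exp_pi_mul_I]
      field_simp
    have habsz1 : ‖z1‖ = Real.sin d * Real.cos x := by
      rw [hz1, norm_mul, habsu, hsind]
    have habsz2 : ‖z2‖ = Real.cos d * Real.sin x := by
      rw [hz2, norm_mul, norm_mul, Complex.norm_I, one_mul, habsa, Complex.norm_real, Real.norm_eq_abs,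
        _root_.abs_of_nonneg hsinx0]
    have hb'val : b' = ((Real.sin (d - x) : ℝ) : ℂ)
        * Complex.exp (((Complex.arg z1 + ω : ℝ) : ℂ) * Complex.I) := by
      rw [hb'2, hz1e, hz2e, hexpflip, habsz1, habsz2, Real.sin_sub]
      push_cast
      ring
    have hsindx0 : 0 ≤ Real.sin (d - x) :=
      Real.sin_nonneg_of_nonneg_of_le_pi (by linarith) (by linarith [Real.pi_pos])
    have habsb' : ‖b'‖ = Real.sin (d - x) := by
      rw [hb'val, norm_mul, Complex.norm_real, Real.norm_eq_abs,
        show (((Complex.arg z1 + ω : ℝ) : ℂ) * Complex.I)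
          = ((Complex.arg z1 + ω : ℝ) : ℂ) * Complex.I from rfl,
        Complex.norm_exp_ofReal_mul_I, mul_one, _root_.abs_of_nonneg hsindx0]
    have harcb' : Real.arcsin (‖b'‖) ≤ (n:ℝ) * Θ := by
      rw [habsb', Real.arcsin_sin (by linarith) (by linarith)]
      by_cases hΘd : Θ ≤ d
      · have hxe : x = Θ := min_eq_left hΘd
        rw [hxe]
        push_cast at harc
        linarith
      · have hxe : x = d := min_eq_right (le_of_not_ge hΘd)
        rw [hxe]
        have : (0:ℝ) ≤ (n:ℝ) * Θ := mul_nonneg (Nat.cast_nonneg n) hΘ.1.le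
        linarith
    -- apply induction hypothesis
    obtain ⟨β, γ, hβ, hγ, heq⟩ := ih a' b' hab' harcb'
    refine ⟨fun i => if i = n+1 then βval else β i, fun i => if i = n+1 then γval else γ i,
      ?_, ?_, ?_⟩
    · intro i hi
      by_cases h : i = n+1
      · simpa [h] using hβmem
      · simpa [h] using hβ i (by omega)
    · intro i h1 h2
      by_cases h : i = n+1
      · simpa [h] using hγmem
      · simpa [h] using hγ i h1 (by omega)
    · have hmap : (List.range n).map
          (fun i => Rot Θ 0 (if i+1 = n+1 then γval else γ (i+1))
            * Rot 0 0 (if i+1 = n+1 then βval else β (i+1)))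
          = (List.range n).map (fun i => Rot Θ 0 (γ (i+1)) * Rot 0 0 (β (i+1))) := by
        apply List.map_congr_left
        intro i hi
        have hlt : i < n := List.mem_range.mp hi
        rw [if_neg (by omega), if_neg (by omega)]
      simp only [List.range_succ, List.map_append, List.prod_append, List.map_cons,
        List.map_nil, List.prod_cons, List.prod_nil, mul_one]
      simp only [if_true]
      rw [hmap]
      rw [← mul_assoc, if_neg (by omega : ¬ (0:ℕ) = n+1), ← heq]
      -- now : M2 a b = M2 a' b' * (Rot Θ 0 γval * Rot 0 0 βval)
      rw [RotT_eq, Rot00_eq, hwval, ← hu, ← hBm, ← hq']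
      have i1 : M2 ((starRingEnd ℂ) u) (-Bm) * M2 u Bm = M2 1 0 := M2_inv_right u Bm hUB
      have i2 : M2 ((starRingEnd ℂ) w) 0 * M2 w 0 = M2 1 0 := by
        have := M2_inv_right w 0 (by simpa using hnormw)
        simpa using this
      rw [mul_assoc (M2 a b * M2 ((starRingEnd ℂ) w) 0) (M2 ((starRingEnd ℂ) u) (-Bm)),
        ← mul_assoc (M2 ((starRingEnd ℂ) u) (-Bm)), i1, M2_one, one_mul,
        mul_assoc (M2 a b), i2, M2_one, mul_one]

theorem stmt15 (Θ : ℝ) (hΘ : Θ ∈ Set.Ioc 0 (π/2)) (l : ℕ) (hl : 2 ≤ l) :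
    (∀ θ ψ φ : ℝ, θ ∈ Set.Ico 0 π → ψ ∈ Set.Ico 0 π → φ ∈ Set.Ico 0 (4*π) →
      ((∃ β γ : ℕ → ℝ,
          (∀ i < l, β i ∈ Set.Ico 0 (4*π)) ∧
          (∀ i, 1 ≤ i → i ≤ l - 1 → γ i ∈ Set.Ico 0 (4*π)) ∧
          Rot θ ψ φ =
            Rot 0 0 (β 0) *
              ((List.range (l - 1)).map
                (fun i => Rot Θ 0 (γ (i+1)) * Rot 0 0 (β (i+1)))).prod) ∨
       (∃ β γ : ℕ → ℝ,
          (∀ i < l, β i ∈ Set.Ico 0 (4*π)) ∧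
          (∀ i, 1 ≤ i → i ≤ l - 1 → γ i ∈ Set.Ico 0 (4*π)) ∧
          Rot θ ψ φ =
            Rot Θ 0 (β 0) *
              ((List.range (l - 1)).map
                (fun i => Rot 0 0 (γ (i+1)) * Rot Θ 0 (β (i+1)))).prod))) ↔
    Θ ≥ π / (2 * ((l : ℝ) - 1)) := by
  have hl1 : (1:ℝ) ≤ (l:ℝ) - 1 := by
    have : (2:ℝ) ≤ (l:ℝ) := by exact_mod_cast hl
    linarith
  have hpos : (0:ℝ) < (l:ℝ) - 1 := by linarith
  have hcast : ((l-1 : ℕ):ℝ) = (l:ℝ) - 1 := by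
    push_cast [Nat.cast_sub (by omega : 1 ≤ l)]
    ring
  constructor
  · intro H
    by_contra hc
    push_neg at hc
    have hnθ : ((l-1 : ℕ):ℝ) * Θ < π/2 := by
      rw [hcast]
      have h2 := mul_lt_mul_of_pos_left hc hpos
      have : ((l:ℝ)-1) * (π / (2 * ((l:ℝ) - 1))) = π/2 := by field_simp
      linarith [h2, this.le, this.ge]
    have Hpi := H (π/2) (π/2) π
      ⟨by positivity, by linarith [Real.pi_pos]⟩
      ⟨by positivity, by linarith [Real.pi_pos]⟩
      ⟨by positivity, by linarith [Real.pi_pos]⟩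
    rcases Hpi with ⟨β, γ, _, _, heq⟩ | ⟨β, γ, _, _, heq⟩
    · rw [q0_eq] at heq
      exact no_word Θ hΘ (l-1) hnθ (-1) (by simp) β γ heq
    · rw [q0_eq] at heq
      have hswap : ∀ i, (fun i => Rot 0 0 (γ (i+1)) * Rot Θ 0 (β (i+1))) i * Smat Θ
          = Smat Θ * (fun i => Rot Θ 0 (γ (i+1)) * Rot 0 0 (β (i+1))) i := by
        intro i
        show Rot 0 0 (γ (i+1)) * Rot Θ 0 (β (i+1)) * Smat Θ = _
        rw [mul_assoc, Smat_swap1, ← mul_assoc, Smat_swap2, mul_assoc]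
      have hps := prod_swap (Smat Θ) _ _ hswap (l-1)
      have heq2 : M2 0 (-1) * Smat Θ
          = Rot Θ 0 (β 0) * ((List.range (l-1)).map
              (fun i => Rot 0 0 (γ (i+1)) * Rot Θ 0 (β (i+1)))).prod * Smat Θ := by rw [heq]
      rw [mul_assoc, hps, ← mul_assoc, Smat_swap1, mul_assoc, Smat_q0] at heq2
      have hfin := Smat_cancel Θ heq2
      exact no_word Θ hΘ (l-1) hnθ 1 (by simp) β γ hfin
  · intro hge θ ψ φ hθ hψ hφ
    left
    have hge' : π/2 ≤ ((l-1:ℕ):ℝ) * Θ := by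
      rw [hcast]
      have h2 := mul_le_mul_of_nonneg_left hge hpos.le
      have heq2 : ((l:ℝ)-1) * (π / (2 * ((l:ℝ) - 1))) = π/2 := by field_simp
      linarith
    obtain ⟨β, γ, hβ, hγ, heq⟩ := decompose Θ hΘ (l-1) _ _ (Rot_normSq θ ψ φ)
      (le_trans (Real.arcsin_le_pi_div_two _) hge')
    exact ⟨β, γ, fun i hi => hβ i (by omega), hγ, by rw [Rot_eq_M2 θ ψ φ]; exact heq⟩
end

section
/- Fix Θ ∈ (0,π/2] and an integer l ≥ 2 with (l−1)·Θ ≤ π/2. Suppose ρ₁, …, ρ_{l−1} ∈ [0, 2Θ] and η₀, η₁, …, η_{l−1} ∈ [0, 2π), and let B = R(0,0,η₀)·R(π/2,0,ρ₁)·R(0,0,η₁)·⋯·R(π/2,0,ρ_{l−1})·R(0,0,η_{l−1}). Then the (1,1) entry of B satisfies |B₁₁| ≥ cos((l−1)·Θ). -/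
open Real

lemma normSq_cs (c s : ℝ) (h : c^2 + s^2 = 1) :
    ‖(c : ℂ) - Complex.I * s‖ = 1 := by
  rw [Complex.norm_def]
  have : Complex.normSq ((c : ℂ) - Complex.I * s) = 1 := by
    simp [Complex.normSq_apply]; nlinarith
  rw [this, Real.sqrt_one]

lemma normSq_cs' (c s : ℝ) (h : c^2 + s^2 = 1) :
    ‖(c : ℂ) + Complex.I * s‖ = 1 := by
  rw [Complex.norm_def]
  have : Complex.normSq ((c : ℂ) + Complex.I * s) = 1 := by
    simp [Complex.normSq_apply]; nlinarith
  rw [this, Real.sqrt_one]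

lemma step_norm (a b : ℂ) (c s : ℝ) (h : c^2 + s^2 = 1) :
    ‖a * c - Complex.I * b * s‖ ^ 2 +
      ‖b * c - Complex.I * a * s‖ ^ 2
      = ‖a‖ ^ 2 + ‖b‖ ^ 2 := by
  rw [Complex.sq_norm, Complex.sq_norm, Complex.sq_norm, Complex.sq_norm]
  simp only [Complex.normSq_apply, Complex.sub_re, Complex.sub_im, Complex.mul_re,
    Complex.mul_im, Complex.I_re, Complex.I_im, Complex.ofReal_re, Complex.ofReal_im]
  nlinarith [sq_nonneg (a.re + b.im), sq_nonneg (a.im - b.re)]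

lemma step_ineq (a b : ℂ) (c s S r : ℝ) (hc : c = Real.cos r) (hs : s = Real.sin r)
    (hr0 : 0 ≤ r) (hS0 : 0 ≤ S) (hSr : S + r ≤ π/2)
    (hnorm : ‖a‖ ^ 2 + ‖b‖ ^ 2 = 1)
    (ha : Real.cos S ≤ ‖a‖) :
    Real.cos (S + r) ≤ ‖a * c - Complex.I * b * s‖ := by
  have hcr : (0:ℝ) ≤ c := hc ▸ Real.cos_nonneg_of_mem_Icc ⟨by linarith [pi_pos], by linarith⟩
  have hsr : (0:ℝ) ≤ s := hs ▸ Real.sin_nonneg_of_nonneg_of_le_pi hr0 (by linarith [pi_pos])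
  have hsS : (0:ℝ) ≤ Real.sin S := Real.sin_nonneg_of_nonneg_of_le_pi hS0 (by linarith [pi_pos])
  have hcS : (0:ℝ) ≤ Real.cos S := Real.cos_nonneg_of_mem_Icc ⟨by linarith [pi_pos], by linarith⟩
  have h1 : ‖a‖ * c - ‖b‖ * s ≤
      ‖a * c - Complex.I * b * s‖ := by
    calc ‖a‖ * c - ‖b‖ * s
        = ‖a * c‖ - ‖Complex.I * b * s‖ := by
          rw [norm_mul, norm_mul, norm_mul, Complex.norm_real, Complex.norm_real,
            Complex.norm_I, Real.norm_of_nonneg hcr, Real.norm_of_nonneg hsr]; ring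
      _ ≤ _ := norm_sub_norm_le _ _
  have hB : (0:ℝ) ≤ ‖b‖ := norm_nonneg b
  have hA : (0:ℝ) ≤ ‖a‖ := norm_nonneg a
  have hBs : ‖b‖ ≤ Real.sin S := by
    nlinarith [Real.sin_sq_add_cos_sq S]
  rw [Real.cos_add, ← hc, ← hs]
  have h2 : Real.cos S * c - Real.sin S * s ≤ ‖a‖ * c - ‖b‖ * s := by
    nlinarith [mul_le_mul_of_nonneg_right ha hcr, mul_le_mul_of_nonneg_right hBs hsr]
  linarith

lemma Fmat (x y : ℝ) : Rot (π/2) 0 x * Rot 0 0 y =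
    !![(Real.cos (x/2) : ℂ) * ((Real.cos (y/2):ℂ) - Complex.I * Real.sin (y/2)),
       -Complex.I * Real.sin (x/2) * ((Real.cos (y/2):ℂ) + Complex.I * Real.sin (y/2));
       -Complex.I * Real.sin (x/2) * ((Real.cos (y/2):ℂ) - Complex.I * Real.sin (y/2)),
       (Real.cos (x/2) : ℂ) * ((Real.cos (y/2):ℂ) + Complex.I * Real.sin (y/2))] := by
  ext i j
  fin_cases i <;> fin_cases j <;>
    simp [Rot, Matrix.mul_apply, Fin.sum_univ_two] <;> ring

lemma entry_step0 (A : Matrix (Fin 2) (Fin 2) ℂ) (x y : ℝ) :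
    ‖(A * (Rot (π/2) 0 x * Rot 0 0 y)) 0 0‖ =
      ‖A 0 0 * Real.cos (x/2) - Complex.I * A 0 1 * Real.sin (x/2)‖ := by
  rw [Fmat]
  have : (A * !![(Real.cos (x/2) : ℂ) * ((Real.cos (y/2):ℂ) - Complex.I * Real.sin (y/2)),
       -Complex.I * Real.sin (x/2) * ((Real.cos (y/2):ℂ) + Complex.I * Real.sin (y/2));
       -Complex.I * Real.sin (x/2) * ((Real.cos (y/2):ℂ) - Complex.I * Real.sin (y/2)),
       (Real.cos (x/2) : ℂ) * ((Real.cos (y/2):ℂ) + Complex.I * Real.sin (y/2))]) 0 0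
      = (A 0 0 * Real.cos (x/2) - Complex.I * A 0 1 * Real.sin (x/2)) *
        ((Real.cos (y/2):ℂ) - Complex.I * Real.sin (y/2)) := by
    simp [Matrix.mul_apply, Fin.sum_univ_two]; ring
  rw [this, norm_mul, normSq_cs _ _ (by nlinarith [Real.sin_sq_add_cos_sq (y/2)]), mul_one]

lemma entry_step1 (A : Matrix (Fin 2) (Fin 2) ℂ) (x y : ℝ) :
    ‖(A * (Rot (π/2) 0 x * Rot 0 0 y)) 0 1‖ =
      ‖A 0 1 * Real.cos (x/2) - Complex.I * A 0 0 * Real.sin (x/2)‖ := by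
  rw [Fmat]
  have : (A * !![(Real.cos (x/2) : ℂ) * ((Real.cos (y/2):ℂ) - Complex.I * Real.sin (y/2)),
       -Complex.I * Real.sin (x/2) * ((Real.cos (y/2):ℂ) + Complex.I * Real.sin (y/2));
       -Complex.I * Real.sin (x/2) * ((Real.cos (y/2):ℂ) - Complex.I * Real.sin (y/2)),
       (Real.cos (x/2) : ℂ) * ((Real.cos (y/2):ℂ) + Complex.I * Real.sin (y/2))]) 0 1
      = (A 0 1 * Real.cos (x/2) - Complex.I * A 0 0 * Real.sin (x/2)) *
        ((Real.cos (y/2):ℂ) + Complex.I * Real.sin (y/2)) := by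
    simp [Matrix.mul_apply, Fin.sum_univ_two]; ring
  rw [this, norm_mul, normSq_cs' _ _ (by nlinarith [Real.sin_sq_add_cos_sq (y/2)]), mul_one]

theorem stmt18 (Θ : ℝ) (hΘ : Θ ∈ Set.Ioc 0 (π/2)) (l : ℕ) (hl : 2 ≤ l)
    (hlΘ : ((l : ℝ) - 1) * Θ ≤ π/2)
    (ρ η : ℕ → ℝ)
    (hρ : ∀ i, 1 ≤ i → i ≤ l - 1 → ρ i ∈ Set.Icc 0 (2*Θ))
    (hη : ∀ i < l, η i ∈ Set.Ico 0 (2*π)) :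
    ‖((Rot 0 0 (η 0) *
        ((List.range (l - 1)).map
          (fun i => Rot (π/2) 0 (ρ (i+1)) * Rot 0 0 (η (i+1)))).prod) 0 0)‖ ≥
      Real.cos (((l : ℝ) - 1) * Θ) := by
  set F : ℕ → Matrix (Fin 2) (Fin 2) ℂ :=
    fun i => Rot (π/2) 0 (ρ (i+1)) * Rot 0 0 (η (i+1)) with hF
  set P : ℕ → Matrix (Fin 2) (Fin 2) ℂ :=
    fun k => Rot 0 0 (η 0) * ((List.range k).map F).prod with hP
  set S : ℕ → ℝ := fun k => ∑ i ∈ Finset.range k, ρ (i+1) / 2 with hS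
  -- basic facts
  have hcast : ((l - 1 : ℕ) : ℝ) = (l : ℝ) - 1 := by
    rw [Nat.cast_sub (by omega)]; norm_num
  have hρ' : ∀ i < l - 1, 0 ≤ ρ (i+1) ∧ ρ (i+1) ≤ 2*Θ := by
    intro i hi
    exact ⟨(hρ (i+1) (by omega) (by omega)).1, (hρ (i+1) (by omega) (by omega)).2⟩
  have hSmono : ∀ k, k ≤ l - 1 → S k ≤ ((l:ℝ) - 1) * Θ := by
    intro k hk
    have h1 : S k ≤ S (l-1) := by
      apply Finset.sum_le_sum_of_subset_of_nonneg
      · exact Finset.range_subset_range.2 hk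
      · intro i hi _
        have := (hρ' i (Finset.mem_range.1 hi)).1
        linarith
    have h2 : S (l-1) ≤ ((l:ℝ) - 1) * Θ := by
      calc S (l-1) ≤ ∑ i ∈ Finset.range (l-1), Θ := by
            apply Finset.sum_le_sum
            intro i hi
            have := (hρ' i (Finset.mem_range.1 hi)).2
            linarith
        _ = ((l:ℝ) - 1) * Θ := by
            rw [Finset.sum_const, Finset.card_range, nsmul_eq_mul, hcast]
    linarith
  have hS0 : ∀ k, k ≤ l - 1 → 0 ≤ S k := by
    intro k hk
    apply Finset.sum_nonneg
    intro i hi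
    have := (hρ' i (by have := Finset.mem_range.1 hi; omega)).1
    linarith
  have key : ∀ k, k ≤ l - 1 →
      (‖P k 0 0‖ ^ 2 + ‖P k 0 1‖ ^ 2 = 1 ∧
       Real.cos (S k) ≤ ‖P k 0 0‖) := by
    intro k
    induction k with
    | zero =>
      intro _
      have h0 : P 0 = Rot 0 0 (η 0) := by simp [hP]
      constructor
      · rw [h0]
        have e0 : (Rot 0 0 (η 0)) 0 0 = (Real.cos (η 0 / 2) : ℂ) - Complex.I * Real.sin (η 0 / 2) := by
          simp [Rot]
        have e1 : (Rot 0 0 (η 0)) 0 1 = 0 := by simp [Rot]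
        rw [e0, e1, normSq_cs _ _ (by nlinarith [Real.sin_sq_add_cos_sq (η 0 / 2)])]
        simp
      · rw [h0]
        have e0 : (Rot 0 0 (η 0)) 0 0 = (Real.cos (η 0 / 2) : ℂ) - Complex.I * Real.sin (η 0 / 2) := by
          simp [Rot]
        rw [e0, normSq_cs _ _ (by nlinarith [Real.sin_sq_add_cos_sq (η 0 / 2)])]
        have : S 0 = 0 := by simp [hS]
        rw [this, Real.cos_zero]
    | succ k ih =>
      intro hk1
      have hk : k ≤ l - 1 := by omega
      obtain ⟨ihn, iha⟩ := ih hk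
      have hPs : P (k+1) = P k * F k := by
        rw [hP]
        simp only [List.range_succ, List.map_append, List.prod_append, List.map_cons,
          List.prod_cons, List.map_nil, List.prod_nil, mul_one]
        rw [Matrix.mul_assoc]
      have hr0 : 0 ≤ ρ (k+1) / 2 := by have := (hρ' k (by omega)).1; linarith
      have hrΘ : ρ (k+1) / 2 ≤ Θ := by have := (hρ' k (by omega)).2; linarith
      have hSsucc : S (k+1) = S k + ρ (k+1) / 2 := by
        rw [hS]; simp [Finset.sum_range_succ]
      have hSr : S k + ρ (k+1) / 2 ≤ π / 2 := by
        have := hSmono (k+1) hk1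
        rw [hSsucc] at this
        linarith
      have e0 : ‖P (k+1) 0 0‖ =
          ‖P k 0 0 * Real.cos (ρ (k+1) / 2) - Complex.I * P k 0 1 * Real.sin (ρ (k+1) / 2)‖ := by
        rw [hPs]; exact entry_step0 _ _ _
      have e1 : ‖P (k+1) 0 1‖ =
          ‖P k 0 1 * Real.cos (ρ (k+1) / 2) - Complex.I * P k 0 0 * Real.sin (ρ (k+1) / 2)‖ := by
        rw [hPs]; exact entry_step1 _ _ _
      constructor
      · rw [e0, e1, step_norm _ _ _ _ (by nlinarith [Real.sin_sq_add_cos_sq (ρ (k+1)/2)]), ihn]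
      · rw [e0, hSsucc]
        exact step_ineq _ _ _ _ _ _ rfl rfl hr0 (hS0 k hk) hSr ihn iha
  obtain ⟨_, hfin⟩ := key (l-1) le_rfl
  have hlast : Real.cos (((l:ℝ) - 1) * Θ) ≤ Real.cos (S (l-1)) := by
    apply Real.cos_le_cos_of_nonneg_of_le_pi (hS0 (l-1) le_rfl)
    · linarith [Real.pi_pos]
    · exact hSmono (l-1) le_rfl
  calc Real.cos (((l:ℝ) - 1) * Θ) ≤ Real.cos (S (l-1)) := hlast
    _ ≤ ‖P (l-1) 0 0‖ := hfin
end

section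
/- Fix Θ ∈ (0,π/2] and let θ ∈ [0,π), ψ ∈ [0,π), φ ∈ [0,4π). For β₁ ∈ ℝ let e₁₂(β₁) denote the (1,2) entry of the matrix R(Θ,0,−β₁)·R(θ,ψ,φ). Then for every β₁, |e₁₂(β₁)|² = ((B−A)/2)·cos β₁ + C·sin β₁ + (A+B)/2, and consequently the minimum of |e₁₂(β₁)| over β₁ ∈ [0,4π) equals sin Λ(θ,ψ,φ,Θ). -/
open Real

/-- A(θ,ψ,φ,Θ). -/
noncomputable def Acoef (θ ψ φ Θ : ℝ) : ℝ :=
  (Real.cos ψ * Real.cos Θ * Real.sin θ * Real.sin (φ/2) -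
      Real.sin Θ * Real.cos θ * Real.sin (φ/2))^2 +
  (Real.sin ψ * Real.cos Θ * Real.sin θ * Real.sin (φ/2) -
      Real.sin Θ * Real.cos (φ/2))^2

/-- B(θ,φ). -/
noncomputable def Bcoef (θ ψ φ Θ : ℝ) : ℝ := (Real.sin θ * Real.sin (φ/2))^2

/-- C(θ,ψ,φ,Θ). -/
noncomputable def Ccoef (θ ψ φ Θ : ℝ) : ℝ :=
  Real.sin Θ * Real.sin θ * Real.sin (φ/2) *
    (Real.sin ψ * Real.sin (φ/2) * Real.cos θ - Real.cos ψ * Real.cos (φ/2))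

/-- Λ(θ,ψ,φ,Θ). -/
noncomputable def Lam (θ ψ φ Θ : ℝ) : ℝ :=
  Real.arcsin (Real.sqrt ((Acoef θ ψ φ Θ + Bcoef θ ψ φ Θ)/2 -
    Real.sqrt ((Ccoef θ ψ φ Θ)^2 + (Bcoef θ ψ φ Θ - Acoef θ ψ φ Θ)^2/4)))


namespace Stmt19Aux

lemma entry_eq (Θ θ ψ φ β : ℝ) :
    (Rot Θ 0 (-β) * Rot θ ψ φ) 0 1 =
      (↑(-Real.cos (β/2) * (Real.sin θ * Real.sin (φ/2)) * Real.sin ψ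
          + Real.sin (β/2) * (Real.cos Θ * (Real.sin θ * Real.sin (φ/2)) * Real.cos ψ
              - Real.sin Θ * (Real.sin (φ/2) * Real.cos θ))) : ℂ)
      + (↑(-Real.cos (β/2) * (Real.sin θ * Real.sin (φ/2)) * Real.cos ψ
          + Real.sin (β/2) * (-(Real.cos Θ * (Real.sin θ * Real.sin (φ/2)) * Real.sin ψ)
              + Real.sin Θ * Real.cos (φ/2))) : ℂ) * Complex.I := by
  have hexp : Complex.exp (-(Complex.I * (ψ:ℂ))) = (Real.cos ψ : ℂ) - (Real.sin ψ : ℂ) * Complex.I := by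
    rw [show -(Complex.I * (ψ:ℂ)) = ((-ψ : ℝ):ℂ) * Complex.I by push_cast; ring,
      Complex.exp_mul_I]
    rw [← Complex.ofReal_cos, ← Complex.ofReal_sin]
    push_cast [Real.cos_neg, Real.sin_neg]; ring
  have hexp0 : Complex.exp (-(Complex.I * ((0:ℝ):ℂ))) = 1 := by norm_num
  simp only [Rot, Matrix.mul_apply, Fin.sum_univ_two, Matrix.cons_val', Matrix.cons_val_zero,
    Matrix.cons_val_one, Matrix.head_cons, Matrix.empty_val', Matrix.cons_val_fin_one,
    Matrix.head_fin_const, hexp, hexp0, neg_div, Real.cos_neg, Real.sin_neg]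
  push_cast
  rw [Complex.ext_iff]
  constructor <;> simp <;> ring

noncomputable def Lamtest (A B C : ℝ) : ℝ :=
  Real.arcsin (Real.sqrt ((A + B)/2 - Real.sqrt (C^2 + (B - A)^2/4)))

lemma part2 (A B C : ℝ) (f : ℝ → ℝ) (hf0 : ∀ β, 0 ≤ f β)
    (hf : ∀ β, (f β)^2 = (B - A)/2 * Real.cos β + C * Real.sin β + (A + B)/2)
    (hB1 : B ≤ 1) (hπ : (0:ℝ) < π) :
    IsLeast (f '' Set.Ico 0 (4*π)) (Real.sin (Lamtest A B C)) := by
  set a : ℝ := (B - A)/2 with ha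
  set r : ℝ := Real.sqrt (C^2 + (B - A)^2/4) with hr
  have hr0 : 0 ≤ r := Real.sqrt_nonneg _
  have hr2 : r^2 = C^2 + a^2 := by
    rw [hr, Real.sq_sqrt (by positivity)]; ring
  have hr2' : r^2 = C^2 + (B - A)^2/4 := by
    rw [hr, Real.sq_sqrt (by positivity)]
  -- r ≥ |a|
  have hra : |a| ≤ r := by
    rw [hr, ← Real.sqrt_sq_eq_abs]
    apply Real.sqrt_le_sqrt
    have h4 : a^2 = (B-A)^2/4 := by rw [ha]; ring
    nlinarith [sq_nonneg C]
  -- find β* with a cos β* + C sin β* = -r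
  obtain ⟨β', hβ'mem, hβ'⟩ : ∃ β', β' ∈ Set.Ico (0:ℝ) (4*π) ∧
      a * Real.cos β' + C * Real.sin β' = -r := by
    by_cases hz : ((⟨-a, -C⟩ : ℂ)) = 0
    · have h1 : a = 0 ∧ C = 0 := by
        rw [Complex.ext_iff] at hz; simpa [neg_eq_zero] using hz
      refine ⟨0, ⟨le_refl 0, by linarith⟩, ?_⟩
      have hBA : B - A = 0 := by have h5 := h1.1; rw [ha] at h5; linarith
      have h6 : r = 0 := by rw [hr, hBA, h1.2]; norm_num
      simp [h1.1, h1.2, h6]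
    · set z : ℂ := ⟨-a, -C⟩ with hzdef
      have habs : ‖z‖ = r := by
        rw [Complex.norm_def, hr]; congr 1
        rw [hzdef, Complex.normSq_mk, ha]; ring
      have hrpos : 0 < r := by
        rw [← habs]; exact norm_pos_iff.mpr hz
      have hcos : Real.cos (Complex.arg z) = -a / r := by
        rw [Complex.cos_arg hz, habs]
      have hsin : Real.sin (Complex.arg z) = -C / r := by
        rw [Complex.sin_arg, habs]
      refine ⟨Complex.arg z + 2*π, ⟨?_, ?_⟩, ?_⟩
      · have := Complex.neg_pi_lt_arg z; linarith
      · have := Complex.arg_le_pi z; linarith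
      · rw [Real.cos_add_two_pi, Real.sin_add_two_pi, hcos, hsin]
        field_simp
        linear_combination hr2'
  have hm : (f β')^2 = (A+B)/2 - r := by rw [hf β']; linarith [hβ']
  have hm0 : 0 ≤ (A+B)/2 - r := hm ▸ sq_nonneg _
  -- sin Lam = sqrt m
  have hmle : (A+B)/2 - r ≤ 1 := by
    have h3 := neg_le_abs a
    linarith [hra, hB1]
  have hsinL : Real.sin (Lamtest A B C) = Real.sqrt ((A+B)/2 - r) := by
    rw [Lamtest, Real.sin_arcsin]
    · exact le_trans (by norm_num) (Real.sqrt_nonneg _)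
    · exact Real.sqrt_le_one.mpr hmle
  rw [hsinL]
  constructor
  · exact ⟨β', hβ'mem, by rw [← hm, Real.sqrt_sq (hf0 β')]⟩
  · rintro y ⟨β, hβ, rfl⟩
    have h1 : (A+B)/2 - r ≤ (f β)^2 := by
      rw [hf β]
      nlinarith [Real.sin_sq_add_cos_sq β, sq_nonneg (a * Real.sin β - C * Real.cos β),
        sq_nonneg (a * Real.cos β + C * Real.sin β + r), hr2, hr0]
    calc Real.sqrt ((A+B)/2 - r) ≤ Real.sqrt ((f β)^2) := Real.sqrt_le_sqrt h1
      _ = f β := Real.sqrt_sq (hf0 β)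

lemma part1 (Θ θ ψ φ : ℝ) (β : ℝ) :
    ‖(Rot Θ 0 (-β) * Rot θ ψ φ) 0 1‖^2 =
        (Bcoef θ ψ φ Θ - Acoef θ ψ φ Θ)/2 * Real.cos β +
          Ccoef θ ψ φ Θ * Real.sin β + (Acoef θ ψ φ Θ + Bcoef θ ψ φ Θ)/2 := by
  rw [entry_eq, Complex.sq_norm, Complex.normSq_add_mul_I]
  have hcos := Real.cos_two_mul (β/2)
  have hsin := Real.sin_two_mul (β/2)
  rw [show 2*(β/2) = β by ring] at hcos hsin
  rw [hcos, hsin]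
  have hb := Real.sin_sq_add_cos_sq (β/2)
  have hp := Real.sin_sq_add_cos_sq ψ
  simp only [Acoef, Bcoef, Ccoef]
  linear_combination (Real.sin θ * Real.sin (φ/2))^2 * (Real.cos (β/2))^2 * hp
    + (Real.sin θ * Real.sin (φ/2))^2 * hb
    + ((Real.cos ψ * Real.cos Θ * Real.sin θ * Real.sin (φ/2) -
        Real.sin Θ * Real.cos θ * Real.sin (φ/2))^2 +
      (Real.sin ψ * Real.cos Θ * Real.sin θ * Real.sin (φ/2) -
        Real.sin Θ * Real.cos (φ/2))^2 - (Real.sin θ * Real.sin (φ/2))^2) * hb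

end Stmt19Aux

theorem stmt19 (Θ : ℝ) (hΘ : Θ ∈ Set.Ioc 0 (π/2))
    (θ ψ φ : ℝ) (hθ : θ ∈ Set.Ico 0 π) (hψ : ψ ∈ Set.Ico 0 π) (hφ : φ ∈ Set.Ico 0 (4*π)) :
    (∀ β₁ : ℝ,
      ‖(Rot Θ 0 (-β₁) * Rot θ ψ φ) 0 1‖^2 =
        (Bcoef θ ψ φ Θ - Acoef θ ψ φ Θ)/2 * Real.cos β₁ +
          Ccoef θ ψ φ Θ * Real.sin β₁ + (Acoef θ ψ φ Θ + Bcoef θ ψ φ Θ)/2) ∧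
    IsLeast ((fun β₁ => ‖(Rot Θ 0 (-β₁) * Rot θ ψ φ) 0 1‖) '' Set.Ico 0 (4*π))
      (Real.sin (Lam θ ψ φ Θ)) := by
  refine ⟨fun β₁ => Stmt19Aux.part1 Θ θ ψ φ β₁, ?_⟩
  have hB1 : Bcoef θ ψ φ Θ ≤ 1 := by
    rw [Bcoef, mul_pow]
    nlinarith [Real.sin_sq_le_one θ, Real.sin_sq_le_one (φ/2), sq_nonneg (Real.sin θ),
      sq_nonneg (Real.sin (φ/2))]
  exact Stmt19Aux.part2 (Acoef θ ψ φ Θ) (Bcoef θ ψ φ Θ) (Ccoef θ ψ φ Θ)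
    (fun β₁ => ‖(Rot Θ 0 (-β₁) * Rot θ ψ φ) 0 1‖)
    (fun β => norm_nonneg _)
    (fun β => Stmt19Aux.part1 Θ θ ψ φ β) hB1 Real.pi_pos
end
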